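/- arXiv:1706.01732 — 8 statements merged into one kernel-verified Lean document; each statement's English description precedes it below -/
import Mathlib

section
/- For every ε > 0 there exists a constant C ≥ 1, depending only on ε, with the following property: for every rectifiable curve γ : [0,1] → ℂ of length ℓ > 0 and every holomorphic injective function g defined on the open set 𝔻(γ([0,1]), εℓ) (the εℓ-neighborhood of the image of γ), one has |g'(u)| ≤ C |g'(v)| for all points u, v in the image of γ. -/
open Metric Set Complex Filter Function
open scoped ENNReal NNReal Topology

noncomputable section

namespace Stmt1Aux

private def primAux (a : ℕ → ℂ) (c : ℂ) : ℂ → ℂ :=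
  fun z => ∑' n : ℕ, (((n:ℂ)+1)⁻¹ * a n) * (z - c)^(n+1)

lemma exists_primitive {f : ℂ → ℂ} {c : ℂ} {R : ℝ} (hR : 0 < R)
    (hf : DifferentiableOn ℂ f (ball c R)) :
    ∃ F : ℂ → ℂ, ∀ z ∈ ball c R, HasDerivAt F (f z) z := by
  have h2 : (0:ℝ) < R/2 := by linarith
  set R₂ : ℝ≥0 := ⟨R/2, h2.le⟩ with hR₂
  set p : FormalMultilinearSeries ℂ ℂ ℂ := cauchyPowerSeries f c R₂ with hp
  have hpb : HasFPowerSeriesOnBall f p c R₂ :=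
    (hf.mono (closedBall_subset_ball (by
      exact (by linarith : R/2 < R)))).hasFPowerSeriesOnBall
      (by exact_mod_cast h2)
  refine ⟨primAux p.coeff c, fun z hz => ?_⟩
  have hzc : dist z c < R := mem_ball.mp hz
  set m : ℝ := max (dist z c) (R/2) with hm
  have hmR : m < R := max_lt hzc (by linarith)
  have hm0 : 0 < m := lt_max_of_lt_right h2
  set r' : ℝ := (m + R)/2 with hr'
  have hmr' : m < r' := by rw [hr']; linarith
  have hr'R : r' < R := by rw [hr']; linarith
  have hr'0 : 0 < r' := hm0.trans hmr'
  set r'' : ℝ≥0 := ⟨r', hr'0.le⟩ with hr''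
  have hqb : HasFPowerSeriesOnBall f (cauchyPowerSeries f c r'') c r'' :=
    (hf.mono (closedBall_subset_ball (by exact hr'R))).hasFPowerSeriesOnBall
      (by exact_mod_cast hr'0)
  have hpq : cauchyPowerSeries f c r'' = p :=
    hqb.hasFPowerSeriesAt.eq_formalMultilinearSeries hpb.hasFPowerSeriesAt
  rw [hpq] at hqb
  have hrad : (r'' : ℝ≥0∞) ≤ p.radius := hqb.r_le
  -- working ball
  set ρ : ℝ := (dist z c + r')/2 with hρ
  have hdz : dist z c < ρ := by
    rw [hρ]; have : dist z c ≤ m := le_max_left _ _; linarith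
  have hρr' : ρ < r' := by
    rw [hρ]; have : dist z c ≤ m := le_max_left _ _; linarith
  have hρ0 : 0 < ρ := lt_of_le_of_lt dist_nonneg hdz
  set ρ' : ℝ≥0 := ⟨ρ, hρ0.le⟩ with hρ'
  have hsum : Summable (fun n => ‖p n‖ * (ρ:ℝ)^n) := by
    have : (ρ' : ℝ≥0∞) < p.radius := lt_of_lt_of_le (by exact_mod_cast hρr') hrad
    exact_mod_cast p.summable_norm_mul_pow this
  -- coefficient norm bound
  have hcoeff : ∀ n, ‖p.coeff n‖ ≤ ‖p n‖ := by
    intro n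
    have h := (p n).le_opNorm (fun _ => (1:ℂ))
    have hprod : (∏ _i : Fin n, ‖(1:ℂ)‖) = 1 := by simp
    rw [hprod, mul_one] at h
    exact h
  -- term functions
  set g : ℕ → ℂ → ℂ := fun n y => (((n:ℂ)+1)⁻¹ * p.coeff n) * (y - c)^(n+1) with hg
  set g' : ℕ → ℂ → ℂ := fun n y => p.coeff n * (y - c)^n with hg'
  have hderiv : ∀ n, ∀ y ∈ ball c ρ, HasDerivAt (g n) (g' n y) y := by
    intro n y _
    have h1 : HasDerivAt (fun y : ℂ => (y - c)^(n+1))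
        ((n+1 : ℕ) * (y - c)^n * 1) y := by
      exact (((hasDerivAt_id y).sub_const c).pow (n+1))
    have h2' := h1.const_mul (((n:ℂ)+1)⁻¹ * p.coeff n)
    refine h2'.congr_deriv ?_
    have hne : ((n:ℂ)+1) ≠ 0 := Nat.cast_add_one_ne_zero n
    have hinv : ((n:ℂ)+1)⁻¹ * ((n:ℂ)+1) = 1 := inv_mul_cancel₀ hne
    simp only [hg']
    push_cast
    linear_combination (p.coeff n * (y - c)^n) * hinv
  have hbound : ∀ n, ∀ y ∈ ball c ρ, ‖g' n y‖ ≤ ‖p n‖ * (ρ:ℝ)^n := by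
    intro n y hy
    have h1 : ‖g' n y‖ = ‖p.coeff n‖ * ‖y - c‖^n := by
      simp [hg', norm_mul, norm_pow]
    rw [h1]
    have h2' : ‖y - c‖ ≤ ρ := by
      have := mem_ball.mp hy; rw [dist_eq_norm] at this; linarith
    exact mul_le_mul (hcoeff n) (pow_le_pow_left₀ (norm_nonneg _) h2' n)
      (pow_nonneg (norm_nonneg _) n) (norm_nonneg _)
  have hg0 : Summable (fun n => g n c) := by
    have : (fun n => g n c) = fun _ => 0 := by
      funext n; simp [hg]
    rw [this]; exact summable_zero
  have key := hasDerivAt_tsum_of_isPreconnected hsum isOpen_ball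
    (convex_ball c ρ).isPreconnected hderiv hbound (mem_ball_self hρ0) hg0
    (mem_ball.mpr hdz)
  -- identify the sum of derivatives with f z
  have hsumf : ∑' n, g' n z = f z := by
    have hmem : z - c ∈ Metric.eball (0:ℂ) (r'' : ℝ≥0∞) := by
      rw [Metric.mem_eball, edist_zero_right, enorm_eq_nnnorm]
      have h1 : ‖z - c‖ < r' := by
        rw [← dist_eq_norm]
        exact lt_of_le_of_lt (le_max_left _ (R/2)) hmr'
      have h2 : ‖z - c‖₊ < r'' := by
        rw [← NNReal.coe_lt_coe]
        rw [coe_nnnorm]; exact h1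
      exact_mod_cast h2
    have hs := hqb.hasSum hmem
    simp only [FormalMultilinearSeries.apply_eq_pow_smul_coeff, smul_eq_mul] at hs
    rw [add_sub_cancel] at hs
    have := hs.tsum_eq
    rw [← this]
    congr 1; funext n; rw [hg']; ring
  rw [hsumf] at key
  exact key

lemma exists_sqrt {u : ℂ → ℂ} {c : ℂ} {R : ℝ} (hR : 0 < R)
    (hu : DifferentiableOn ℂ u (ball c R)) (hne : ∀ z ∈ ball c R, u z ≠ 0)
    (huc : u c = 1) :
    ∃ h : ℂ → ℂ, DifferentiableOn ℂ h (ball c R) ∧ (∀ z ∈ ball c R, (h z)^2 = u z) ∧ h c = 1 := by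
  have hu' : DifferentiableOn ℂ (deriv u) (ball c R) :=
    ((hu.analyticOnNhd isOpen_ball).deriv).differentiableOn
  have hg : DifferentiableOn ℂ (fun z => deriv u z / u z) (ball c R) :=
    hu'.div hu hne
  obtain ⟨F, hF⟩ := exists_primitive hR hg
  set L : ℂ → ℂ := fun z => F z - F c with hL
  have hLd : ∀ z ∈ ball c R, HasDerivAt L (deriv u z / u z) z := by
    intro z hz; exact (hF z hz).sub_const (F c)
  have hLc : L c = 0 := by simp [hL]
  have hLdiff : DifferentiableOn ℂ L (ball c R) := fun z hz =>
    ((hLd z hz).differentiableAt).differentiableWithinAt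
  -- u * exp(-L) is constant = 1
  set φ : ℂ → ℂ := fun z => u z * Complex.exp (-L z) with hφ
  have hφd : ∀ z ∈ ball c R, HasDerivAt φ 0 z := by
    intro z hz
    have h1 : HasDerivAt u (deriv u z) z :=
      (hu.differentiableAt (isOpen_ball.mem_nhds hz)).hasDerivAt
    have h2 : HasDerivAt (fun z => Complex.exp (-L z)) (-(deriv u z / u z) * Complex.exp (-L z)) z := by
      have := ((hLd z hz).neg).cexp
      simpa [mul_comm] using this
    have h3 := h1.mul h2
    refine h3.congr_deriv ?_
    have hk : u z * (deriv u z / u z) = deriv u z := by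
      rw [mul_div_assoc']; exact mul_div_cancel_left₀ _ (hne z hz)
    beta_reduce
    linear_combination (-Complex.exp (-L z)) * hk
  have hφconst : ∀ z ∈ ball c R, φ z = 1 := by
    intro z hz
    have hconv : Convex ℝ (ball c R) := convex_ball c R
    have hdiff : DifferentiableOn ℂ φ (ball c R) := fun y hy =>
      ((hφd y hy).differentiableAt).differentiableWithinAt
    have hzero : ∀ y ∈ ball c R, fderivWithin ℂ φ (ball c R) y = 0 := by
      intro y hy
      rw [fderivWithin_of_isOpen isOpen_ball hy]
      have h := (hφd y hy).hasFDerivAt.fderiv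
      rw [h]; ext w; simp
    have := hconv.is_const_of_fderivWithin_eq_zero hdiff hzero hz (mem_ball_self hR)
    rw [this]
    simp [hφ, huc, hLc]
  have hexp : ∀ z ∈ ball c R, u z = Complex.exp (L z) := by
    intro z hz
    have h1 := hφconst z hz
    have h2 : Complex.exp (-L z) * Complex.exp (L z) = 1 := by
      rw [← Complex.exp_add]; simp
    have h1' : u z * Complex.exp (-L z) = 1 := h1
    calc u z = u z * (Complex.exp (-L z) * Complex.exp (L z)) := by rw [h2, mul_one]
    _ = (u z * Complex.exp (-L z)) * Complex.exp (L z) := by ring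
    _ = Complex.exp (L z) := by rw [h1', one_mul]
  refine ⟨fun z => Complex.exp (L z / 2), ?_, ?_, ?_⟩
  · exact (hLdiff.div_const 2).cexp
  · intro z hz
    have : Complex.exp (L z / 2) ^ 2 = Complex.exp (L z / 2 + L z / 2) := by
      rw [Complex.exp_add]; ring
    rw [hexp z hz]
    simp only []
    rw [this]
    congr 1; ring
  · simp [hLc]

lemma covering_of_bounded {H : ℂ → ℂ} {M : ℝ} (hd : DifferentiableOn ℂ H (ball 0 1))
    (h0 : H 0 = 0) (hM : ∀ z ∈ ball (0:ℂ) 1, ‖H z‖ ≤ M) (hM0 : 0 < M)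
    (hm0 : deriv H 0 ≠ 0) :
    ball (0:ℂ) ((‖deriv H 0‖)^2 / (40 * M)) ⊆ H '' (ball 0 1) := by
  set m : ℝ := ‖deriv H 0‖ with hm
  have hmpos : 0 < m := by
    rw [hm]; exact norm_pos_iff.mpr hm0
  have h01 : (0:ℂ) ∈ ball (0:ℂ) 1 := mem_ball_self one_pos
  set ψ : ℂ → ℂ := dslope H 0 with hψ
  have hψd : DifferentiableOn ℂ ψ (ball 0 1) :=
    (differentiableOn_dslope (isOpen_ball.mem_nhds h01)).mpr hd
  have hψ0 : ψ 0 = deriv H 0 := dslope_same H 0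
  have hHz : ∀ z : ℂ, H z = z * ψ z := by
    intro z
    rcases eq_or_ne z 0 with rfl | hz
    · simp [h0]
    · rw [hψ, dslope_of_ne H hz, slope_def_field, h0]
      field_simp
      ring
  have hmapsTo : MapsTo H (ball 0 1) (ball (H 0) (2*M)) := by
    intro x hx
    rw [mem_ball, dist_eq_norm, h0, sub_zero]
    exact lt_of_le_of_lt (hM x hx) (by linarith)
  have hψbd : ∀ z ∈ ball (0:ℂ) 1, ‖ψ z‖ ≤ 2*M := by
    intro z hz
    have := Complex.norm_dslope_le_div_of_mapsTo_ball hd (hmapsTo.mono_right ball_subset_closedBall) hz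
    simpa using this
  have hm2M : m ≤ 2*M := by
    have := hψbd 0 h01
    rwa [hψ0] at this
  set χ : ℂ → ℂ := dslope ψ 0 with hχ
  have hψmaps : MapsTo ψ (ball 0 1) (ball (ψ 0) (5*M)) := by
    intro x hx
    rw [mem_ball, dist_eq_norm]
    calc ‖ψ x - ψ 0‖ ≤ ‖ψ x‖ + ‖ψ 0‖ := norm_sub_le _ _
      _ ≤ 2*M + 2*M := add_le_add (hψbd x hx) (hψbd 0 h01)
      _ < 5*M := by linarith
  have hχbd : ∀ z ∈ ball (0:ℂ) 1, ‖χ z‖ ≤ 5*M := by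
    intro z hz
    have := Complex.norm_dslope_le_div_of_mapsTo_ball hψd (hψmaps.mono_right ball_subset_closedBall) hz
    simpa using this
  have hψz : ∀ z : ℂ, ψ z = ψ 0 + z * χ z := by
    intro z
    rcases eq_or_ne z 0 with rfl | hz
    · simp
    · rw [hχ, dslope_of_ne ψ hz, slope_def_field]
      field_simp
      ring
  set r : ℝ := m/(10*M) with hr
  have hr0 : 0 < r := by positivity
  have hr15 : r ≤ 1/5 := by
    rw [hr, div_le_div_iff₀ (by positivity) (by norm_num)]
    linarith
  have hr1 : r < 1 := by linarith
  -- lower bound on the sphere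
  have hsphere : ∀ z ∈ sphere (0:ℂ) r, m^2/(20*M) ≤ ‖H z - H 0‖ := by
    intro z hz
    have hzr : ‖z‖ = r := by simpa using hz
    have hzball : z ∈ ball (0:ℂ) 1 := by
      rw [mem_ball]; simp only [dist_zero_right]
      calc ‖z‖ = r := hzr
        _ < 1 := hr1
    rw [h0, sub_zero]
    have expand : H z = z * (ψ 0 + z * χ z) := by rw [hHz z, hψz z]
    rw [expand]
    have h2 : ‖z * χ z‖ ≤ r * (5*M) := by
      rw [norm_mul, hzr]
      exact mul_le_mul_of_nonneg_left (hχbd z hzball) hr0.le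
    have h3 : ‖ψ 0‖ ≤ ‖ψ 0 + z * χ z‖ + ‖z * χ z‖ := by
      have := norm_sub_le (ψ 0 + z * χ z) (z * χ z)
      simpa using this
    have h5 : r * (5*M) = m/2 := by
      rw [hr]; field_simp; ring
    have hψ0m : ‖ψ 0‖ = m := by rw [hψ0, hm]
    have h1 : m/2 ≤ ‖ψ 0 + z * χ z‖ := by
      rw [hψ0m] at h3
      rw [h5] at h2
      linarith
    rw [norm_mul, hzr]
    calc m^2/(20*M) = r * (m/2) := by rw [hr]; field_simp; ring
      _ ≤ r * ‖ψ 0 + z * χ z‖ := mul_le_mul_of_nonneg_left h1 hr0.le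
  have hDC : DiffContOnCl ℂ H (ball 0 r) :=
    ⟨hd.mono (ball_subset_ball hr1.le),
     (hd.continuousOn).mono (by
        rw [closure_ball (0:ℂ) hr0.ne']
        exact closedBall_subset_ball hr1)⟩
  have hfreq : ∃ᶠ z in nhds (0:ℂ), H z ≠ H 0 := by
    by_contra hcon
    rw [not_frequently] at hcon
    push_neg at hcon
    have hev : H =ᶠ[nhds (0:ℂ)] (fun _ => H 0) := by
      filter_upwards [hcon] with x hx
      simpa using hx
    have := hev.deriv_eq
    rw [deriv_const] at this
    exact hm0 this
  have hcov := hDC.ball_subset_image_closedBall hr0 hsphere hfreq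
  have heq : (‖deriv H 0‖)^2 / (40*M) = (m^2/(20*M))/2 := by
    rw [← hm]; ring
  rw [heq]
  conv_lhs => rw [show (0:ℂ) = H 0 from h0.symm]
  exact hcov.trans (image_mono (closedBall_subset_ball hr1))

lemma koebe_normalized {f : ℂ → ℂ} (hd : DifferentiableOn ℂ f (ball 0 1))
    (hinj : InjOn f (ball 0 1)) (h0 : f 0 = 0) (h1 : deriv f 0 = 1) :
    ball (0:ℂ) (1/32) ⊆ f '' (ball 0 1) := by
  intro w hw
  by_contra hwim
  have hw32 : ‖w‖ < 1/32 := by simpa using hw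
  have h01 : (0:ℂ) ∈ ball (0:ℂ) 1 := mem_ball_self one_pos
  have hw0 : w ≠ 0 := by rintro rfl; exact hwim ⟨0, h01, h0⟩
  have hwabs : 0 < ‖w‖ := norm_pos_iff.mpr hw0
  set u : ℂ → ℂ := fun z => 1 - f z / w with hu
  have hud : DifferentiableOn ℂ u (ball 0 1) :=
    (differentiableOn_const 1).sub (hd.div_const w)
  have hune : ∀ z ∈ ball (0:ℂ) 1, u z ≠ 0 := by
    intro z hz hcon
    have h2 : (1:ℂ) = f z / w := sub_eq_zero.mp hcon
    have h3 : f z = w := by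
      field_simp at h2; exact h2.symm
    exact hwim ⟨z, hz, h3⟩
  have huc : u 0 = 1 := by simp [hu, h0]
  obtain ⟨h, hhd, hsq, hh0⟩ := exists_sqrt one_pos hud hune huc
  -- no two opposite values of h
  have hkey : ∀ a ∈ ball (0:ℂ) 1, ∀ b ∈ ball (0:ℂ) 1, h a + h b ≠ 0 := by
    intro a ha b hb hcon
    have hab : h a = - h b := eq_neg_of_add_eq_zero_left hcon
    have huab : u a = u b := by
      rw [← hsq a ha, ← hsq b hb, hab]; ring
    have hfab : f a = f b := by
      have := huab
      rw [hu] at this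
      simp only [sub_right_inj] at this
      field_simp [hw0] at this
      exact this
    have haeq : a = b := hinj ha hb hfab
    rw [haeq] at hab
    have hb0 : h b = 0 := by linear_combination ((1:ℂ)/2) * hab
    have : u b = 0 := by rw [← hsq b hb, hb0]; ring
    exact hune b hb this
  -- derivative of h at 0
  have hfd0 : HasDerivAt f 1 0 := by
    have := (hd.differentiableAt (isOpen_ball.mem_nhds h01)).hasDerivAt
    rwa [h1] at this
  have hud0 : HasDerivAt u (-(1/w)) 0 := by
    have := (hfd0.div_const w).const_sub 1
    simpa using this
  have hhd0 : HasDerivAt h (deriv h 0) 0 :=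
    (hhd.differentiableAt (isOpen_ball.mem_nhds h01)).hasDerivAt
  have hev : (fun z => (h z)^2) =ᶠ[nhds (0:ℂ)] u := by
    filter_upwards [isOpen_ball.mem_nhds h01] with z hz
    exact hsq z hz
  have hueq : HasDerivAt u ((2:ℕ) * h 0 ^ 1 * deriv h 0) 0 := by
    have hp := hhd0.pow 2
    simp only [Nat.cast_ofNat] at hp ⊢
    exact hp.congr_of_eventuallyEq hev.symm
  have hderivh : deriv h 0 = -(1/(2*w)) := by
    have := hud0.unique hueq
    rw [hh0] at this
    simp at this
    field_simp
    field_simp at this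
    linear_combination -this
  -- the bounded omission function H
  set Hf : ℂ → ℂ := fun z => (h z - 1)/(h z + 1) with hHf
  have hden : ∀ z ∈ ball (0:ℂ) 1, h z + 1 ≠ 0 := by
    intro z hz
    have := hkey z hz 0 h01
    rwa [hh0] at this
  have HD : DifferentiableOn ℂ Hf (ball 0 1) :=
    (hhd.sub (differentiableOn_const 1)).div (hhd.add (differentiableOn_const 1)) hden
  have hHf0 : Hf 0 = 0 := by simp [hHf, hh0]
  have hHfd0 : HasDerivAt Hf (deriv h 0 / 2) 0 := by
    have hnum : HasDerivAt (fun z => h z - 1) (deriv h 0) 0 := hhd0.sub_const 1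
    have hden' : HasDerivAt (fun z => h z + 1) (deriv h 0) 0 := hhd0.add_const 1
    have hd0 : h 0 + 1 ≠ 0 := by rw [hh0]; norm_num
    have := hnum.div hden' hd0
    have heq' : (deriv h 0 * (h 0 + 1) - (h 0 - 1) * deriv h 0) / (h 0 + 1) ^ 2 = deriv h 0 / 2 := by
      rw [hh0]
      ring_nf
    rw [← heq']
    exact this
  have hHd0val : deriv Hf 0 = -(1/(4*w)) := by
    rw [hHfd0.deriv, hderivh]
    field_simp
    ring
  have hHd0ne : deriv Hf 0 ≠ 0 := by
    rw [hHd0val]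
    simp [hw0]
  set m : ℝ := ‖deriv Hf 0‖ with hm
  have habsval : ‖deriv Hf 0‖ = 1/(4*‖w‖) := by
    rw [hHd0val, norm_neg, norm_div, norm_one, norm_mul]
    norm_num [Complex.norm_ofNat]
  have hm8 : 8 < m := by
    rw [hm, habsval]
    rw [lt_div_iff₀ (by positivity)]
    linarith
  -- no two values with product 1
  have hmul : ∀ a ∈ ball (0:ℂ) 1, ∀ b ∈ ball (0:ℂ) 1, Hf a * Hf b ≠ 1 := by
    intro a ha b hb hcon
    rw [hHf] at hcon
    have hda := hden a ha
    have hdb := hden b hb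
    field_simp at hcon
    have : h a + h b = 0 := by linear_combination (-(1:ℂ)/2) * hcon
    exact hkey a ha b hb this
  -- image is open
  have hopen : IsOpen (Hf '' ball 0 1) := by
    have hA := (HD.analyticOnNhd isOpen_ball)
    rcases hA.is_constant_or_isOpen (convex_ball (0:ℂ) 1).isPreconnected with hconst | hop
    · exfalso
      obtain ⟨w₀, hw₀⟩ := hconst
      have hev2 : Hf =ᶠ[nhds (0:ℂ)] (fun _ => w₀) := by
        filter_upwards [isOpen_ball.mem_nhds h01] with z hz
        exact hw₀ z hz
      have := hev2.deriv_eq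
      rw [deriv_const] at this
      exact hHd0ne this
    · exact hop _ (subset_refl _) isOpen_ball
  obtain ⟨σ₀, hσ₀pos, hσ₀sub⟩ : ∃ σ₀ > 0, ball (0:ℂ) σ₀ ⊆ Hf '' ball 0 1 := by
    have hmem : (0:ℂ) ∈ Hf '' ball 0 1 := ⟨0, h01, hHf0⟩
    obtain ⟨σ, hσpos, hσsub⟩ := Metric.isOpen_iff.mp hopen 0 hmem
    exact ⟨σ, hσpos, hσsub⟩
  -- boundedness from a covered ball
  have hbound : ∀ σ : ℝ, 0 < σ → ball (0:ℂ) σ ⊆ Hf '' ball 0 1 →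
      ∀ z ∈ ball (0:ℂ) 1, ‖Hf z‖ ≤ 1/σ := by
    intro σ hσ hsub z hz
    by_contra hcon
    push_neg at hcon
    have hHz0 : Hf z ≠ 0 := by
      intro hzz
      rw [hzz] at hcon
      simp only [norm_zero] at hcon
      have : (0:ℝ) < 1/σ := by positivity
      linarith
    have hζ : (Hf z)⁻¹ ∈ ball (0:ℂ) σ := by
      rw [mem_ball, dist_zero_right, norm_inv]
      rw [show ‖Hf z‖ = ‖Hf z‖ from rfl]
      rw [inv_lt_comm₀ (norm_pos_iff.mpr hHz0) hσ]
      exact (one_div σ) ▸ hcon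
    obtain ⟨b, hb, hbe⟩ := hsub hζ
    have : Hf z * Hf b = 1 := by rw [hbe]; exact mul_inv_cancel₀ hHz0
    exact hmul z hz b hb this
  -- growth of covered balls
  have hgrow : ∀ σ : ℝ, 0 < σ → ball (0:ℂ) σ ⊆ Hf '' ball 0 1 →
      ball (0:ℂ) (σ * (m^2/40)) ⊆ Hf '' ball 0 1 := by
    intro σ hσ hsub
    have hcov := covering_of_bounded HD hHf0 (hbound σ hσ hsub) (by positivity) hHd0ne
    have heq : (‖deriv Hf 0‖)^2 / (40 * (1/σ)) = σ * (m^2/40) := by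
      rw [← hm]; field_simp
    rwa [heq] at hcov
  set q : ℝ := m^2/40 with hq
  have hq1 : 1 < q := by
    rw [hq]
    nlinarith
  have hiter : ∀ n : ℕ, ball (0:ℂ) (σ₀ * q^n) ⊆ Hf '' ball 0 1 := by
    intro n
    induction n with
    | zero => simpa using hσ₀sub
    | succ k ih =>
      have hpos : 0 < σ₀ * q^k := by positivity
      have := hgrow _ hpos ih
      have heq : σ₀ * q^k * q = σ₀ * q^(k+1) := by ring
      rwa [heq] at this
  -- upper bound on covered radii
  have hup : ∀ σ : ℝ, 0 < σ → ball (0:ℂ) σ ⊆ Hf '' ball 0 1 → σ ≤ 1/(m-1) := by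
    intro σ hσ hsub
    have hb := hbound σ hσ hsub
    have hmaps : MapsTo Hf (ball 0 1) (ball (Hf 0) (1/σ + 1)) := by
      intro x hx
      rw [mem_ball, hHf0, dist_zero_right]
      exact lt_of_le_of_lt (hb x hx) (by linarith)
    have := Complex.norm_deriv_le_div_of_mapsTo_ball HD (hmaps.mono_right ball_subset_closedBall) one_pos
    rw [div_one] at this
    rw [← hm] at this
    -- m ≤ 1/σ + 1
    rw [le_div_iff₀ (by linarith : (0:ℝ) < m - 1)]
    have h1σ : 0 < 1/σ := by positivity
    calc σ * (m - 1) ≤ σ * (1/σ) := by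
          apply mul_le_mul_of_nonneg_left _ hσ.le
          linarith
      _ = 1 := by field_simp
  obtain ⟨n, hn⟩ : ∃ n : ℕ, (1/(m-1))/σ₀ < q^n := pow_unbounded_of_one_lt _ hq1
  have hle := hup _ (by positivity) (hiter n)
  rw [div_lt_iff₀ hσ₀pos] at hn
  nlinarith

lemma koebe {f : ℂ → ℂ} {z₀ : ℂ} {r : ℝ} (hr : 0 < r)
    (hd : DifferentiableOn ℂ f (ball z₀ r)) (hinj : InjOn f (ball z₀ r)) :
    ball (f z₀) (r * ‖deriv f z₀‖ / 32) ⊆ f '' (ball z₀ r) := by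
  rcases eq_or_ne (deriv f z₀) 0 with hzero | hne
  · rw [hzero]
    simp
  have hdpos : 0 < ‖deriv f z₀‖ := norm_pos_iff.mpr hne
  set d : ℂ := deriv f z₀ with hdd
  set g : ℂ → ℂ := fun ζ => (f (z₀ + r*ζ) - f z₀) / (r * d) with hg
  have hrd : (r : ℂ) * d ≠ 0 := by
    apply mul_ne_zero _ hne
    exact_mod_cast hr.ne'
  have hmap : ∀ ζ : ℂ, ζ ∈ ball (0:ℂ) 1 → z₀ + r*ζ ∈ ball z₀ r := by
    intro ζ hζ
    rw [mem_ball, dist_eq_norm]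
    simp only [add_sub_cancel_left, norm_mul]
    rw [mem_ball, dist_zero_right] at hζ
    calc ‖(r:ℂ)‖ * ‖ζ‖ < ‖(r:ℂ)‖ * 1 := by
          apply mul_lt_mul_of_pos_left hζ
          simpa [Complex.norm_real, abs_of_pos hr] using hr
      _ = r := by simp [Complex.norm_real, abs_of_pos hr]
  have hgd : DifferentiableOn ℂ g (ball 0 1) := by
    apply DifferentiableOn.div_const
    apply DifferentiableOn.sub_const
    have haff : ∀ ζ : ℂ, HasDerivAt (fun ζ : ℂ => z₀ + r*ζ) (r:ℂ) ζ := by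
      intro ζ
      simpa using ((hasDerivAt_id ζ).const_mul (r:ℂ)).const_add z₀
    intro ζ hζ
    exact ((hd.differentiableAt (isOpen_ball.mem_nhds (hmap ζ hζ))).comp ζ
      ((haff ζ).differentiableAt)).differentiableWithinAt
  have hginj : InjOn g (ball 0 1) := by
    intro a ha b hb hab
    rw [hg] at hab
    simp only [div_eq_div_iff hrd hrd] at hab
    have h2 : f (z₀ + r*a) = f (z₀ + r*b) := by
      exact mul_left_cancel₀ hrd (by linear_combination hab)
    have := hinj (hmap a ha) (hmap b hb) h2
    have hr0 : (r:ℂ) ≠ 0 := by exact_mod_cast hr.ne'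
    exact mul_left_cancel₀ hr0 (by linear_combination this)
  have hg0 : g 0 = 0 := by simp [hg]
  have hgderiv : deriv g 0 = 1 := by
    have hf' : HasDerivAt f d (z₀ + r*0) := by
      simp only [mul_zero, add_zero]
      exact (hd.differentiableAt (isOpen_ball.mem_nhds (mem_ball_self hr))).hasDerivAt
    have haff : HasDerivAt (fun ζ : ℂ => z₀ + r*ζ) (r:ℂ) 0 := by
      simpa using ((hasDerivAt_id (0:ℂ)).const_mul (r:ℂ)).const_add z₀
    have hcomp : HasDerivAt (fun ζ => f (z₀ + r*ζ)) (d * r) 0 := hf'.comp 0 haff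
    have : HasDerivAt g ((d * r)/(r*d)) 0 := (hcomp.sub_const (f z₀)).div_const (r*d)
    rw [this.deriv]
    rw [mul_comm (r:ℂ) d]
    exact div_self (by rw [mul_comm]; exact hrd)
  have hcov := koebe_normalized hgd hginj hg0 hgderiv
  intro y hy
  have hyb : (y - f z₀)/(r*d) ∈ ball (0:ℂ) (1/32) := by
    rw [mem_ball, dist_zero_right, norm_div]
    rw [mem_ball, dist_eq_norm] at hy
    have hrdnorm : ‖(r:ℂ)*d‖ = r * ‖d‖ := by
      simp [norm_mul, Complex.norm_real, abs_of_pos hr]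
    rw [hrdnorm, div_lt_iff₀ (by positivity)]
    calc ‖y - f z₀‖ < r * ‖deriv f z₀‖ / 32 := hy
      _ = 1/32 * (r * ‖d‖) := by rw [← hdd]; ring
  obtain ⟨ζ, hζ, hζe⟩ := hcov hyb
  refine ⟨z₀ + r*ζ, hmap ζ hζ, ?_⟩
  rw [hg] at hζe
  rw [div_eq_iff hrd] at hζe
  have : f (z₀ + r*ζ) - f z₀ = y - f z₀ := by
    rw [hζe]
    exact div_mul_cancel₀ _ hrd
  linear_combination this

lemma exists_inverse {f : ℂ → ℂ} {z₀ : ℂ} {r : ℝ} (hr : 0 < r)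
    (hd : DifferentiableOn ℂ f (ball z₀ r)) (hinj : InjOn f (ball z₀ r)) :
    ∃ F : ℂ → ℂ, DifferentiableOn ℂ F (f '' ball z₀ r) ∧ IsOpen (f '' ball z₀ r) ∧
      (∀ z ∈ ball z₀ r, F (f z) = z) ∧ (MapsTo F (f '' ball z₀ r) (ball z₀ r)) ∧
      (∀ z ∈ ball z₀ r, deriv f z ≠ 0 ∧ deriv F (f z) = (deriv f z)⁻¹) := by
  set D := ball z₀ r with hD
  have hA : AnalyticOnNhd ℂ f D := hd.analyticOnNhd isOpen_ball
  -- two distinct points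
  have htwo : z₀ ∈ D ∧ z₀ + r/2 ∈ D ∧ z₀ ≠ z₀ + r/2 := by
    refine ⟨mem_ball_self hr, ?_, ?_⟩
    · rw [hD, mem_ball, dist_eq_norm]
      simp only [add_sub_cancel_left]
      rw [show ‖((r:ℂ)/2)‖ = r/2 by
        rw [show ((r:ℂ)/2) = ((r/2 : ℝ) : ℂ) by push_cast; ring]
        rw [Complex.norm_real, Real.norm_eq_abs]
        exact abs_of_pos (by linarith)]
      linarith
    · intro hcon
      have : ((r:ℂ)/2) = 0 := by linear_combination -hcon
      rw [div_eq_zero_iff] at this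
      rcases this with h | h
      · exact hr.ne' (by exact_mod_cast h)
      · norm_num at h
  have hnonconst : ¬ ∃ w, ∀ z ∈ D, f z = w := by
    rintro ⟨w, hw⟩
    have h1 := hw _ htwo.1
    have h2 := hw _ htwo.2.1
    exact htwo.2.2 (hinj htwo.1 htwo.2.1 (h1.trans h2.symm))
  have hopen_img : ∀ s ⊆ D, IsOpen s → IsOpen (f '' s) := by
    rcases hA.is_constant_or_isOpen (convex_ball z₀ r).isPreconnected with hconst | hop
    · exact absurd hconst hnonconst
    · exact hop
  have hΩ : IsOpen (f '' D) := hopen_img D (subset_refl D) isOpen_ball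
  set F : ℂ → ℂ := invFunOn f D with hF
  have hFleft : ∀ z ∈ D, F (f z) = z := fun z hz => hinj.leftInvOn_invFunOn hz
  have hFmem : ∀ y ∈ f '' D, F y ∈ D ∧ f (F y) = y := by
    rintro y ⟨z, hz, rfl⟩
    exact ⟨Function.invFunOn_mem ⟨z, hz, rfl⟩, Function.invFunOn_eq ⟨z, hz, rfl⟩⟩
  -- continuity of F
  have hFcontAt : ∀ y ∈ f '' D, ContinuousAt F y := by
    intro y hy
    rw [continuousAt_def]
    intro U hU
    obtain ⟨V, hVU, hVopen, hFyV⟩ := _root_.mem_nhds_iff.mp hU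
    have hWopen : IsOpen (f '' (V ∩ D)) :=
      hopen_img _ inter_subset_right (hVopen.inter isOpen_ball)
    have hyW : y ∈ f '' (V ∩ D) := by
      obtain ⟨hFyD, hfFy⟩ := hFmem y hy
      exact ⟨F y, ⟨hFyV, hFyD⟩, hfFy⟩
    have hWsub : f '' (V ∩ D) ⊆ F ⁻¹' U := by
      rintro y' ⟨x, ⟨hxV, hxD⟩, rfl⟩
      rw [mem_preimage, hFleft x hxD]
      exact hVU hxV
    exact mem_of_superset (hWopen.mem_nhds hyW) hWsub
  -- eventual left-inverse property near any point of D
  have hevF : ∀ x ∈ D, ∀ᶠ t in 𝓝 x, F (f t) = t := by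
    intro x hx
    filter_upwards [isOpen_ball.mem_nhds hx] with t ht
    exact hFleft t ht
  -- differentiability at points with nonvanishing derivative
  have hdiff_at : ∀ x ∈ D, deriv f x ≠ 0 → HasStrictDerivAt F (deriv f x)⁻¹ (f x) := by
    intro x hx hne
    have hstrict : HasStrictDerivAt f (deriv f x) x := by
      have hca : ContDiffAt ℂ 1 f x := (hA x hx).contDiffAt
      exact hca.hasStrictDerivAt one_ne_zero
    exact hstrict.to_local_left_inverse hne (hevF x hx)
  -- differentiability everywhere on the image
  have hFdiff : DifferentiableOn ℂ F (f '' D) := by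
    rintro y ⟨x, hx, rfl⟩
    rcases eq_or_ne (deriv f x) 0 with hzero | hne
    · -- removable singularity argument
      -- deriv f is not identically zero near x
      have hnotall : ¬ (∀ᶠ z in 𝓝 x, deriv f z = 0) := by
        intro hev
        have hEq : EqOn (deriv f) 0 D :=
          (hA.deriv).eqOn_zero_of_preconnected_of_eventuallyEq_zero
            (convex_ball z₀ r).isPreconnected hx (by exact hev)
        have hconst : ∀ z ∈ D, f z = f z₀ := by
          intro z hz
          exact (convex_ball z₀ r).is_const_of_fderivWithin_eq_zero hd
            (fun t ht => by
              rw [fderivWithin_of_isOpen isOpen_ball ht]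
              have hdt : DifferentiableAt ℂ f t := hd.differentiableAt (isOpen_ball.mem_nhds ht)
              have hzero' : deriv f t = 0 := by simpa using hEq ht
              have h0 : HasDerivAt f 0 t := by
                have hh := hdt.hasDerivAt
                rwa [hzero'] at hh
              have hfd := h0.hasFDerivAt.fderiv
              rw [hfd]
              ext w
              simp) hz (mem_ball_self hr)
        exact hnonconst ⟨f z₀, hconst⟩
      have hne_punct : ∀ᶠ z in 𝓝[≠] x, deriv f z ≠ 0 :=
        ((hA.deriv x hx).eventually_eq_zero_or_eventually_ne_zero).resolve_left hnotall
      -- find a small open set s ∋ x inside D where deriv f ≠ 0 away from x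
      obtain ⟨t, htmem, htprop⟩ := eventually_nhdsWithin_iff.mp hne_punct |>.exists_mem
      obtain ⟨t₁, ht₁sub, ht₁open, hxt₁⟩ := _root_.mem_nhds_iff.mp htmem
      set s := t₁ ∩ D with hs
      have hsopen : IsOpen s := ht₁open.inter isOpen_ball
      have hxs : x ∈ s := ⟨hxt₁, hx⟩
      have hsprop : ∀ z ∈ s, z ≠ x → deriv f z ≠ 0 := by
        intro z hz hzx
        exact htprop z (ht₁sub hz.1) hzx
      set W := f '' s with hW
      have hWopen : IsOpen W := hopen_img s (by rw [hs]; exact inter_subset_right) hsopen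
      have hyW : f x ∈ W := ⟨x, hxs, rfl⟩
      -- F is differentiable on W \ {f x}
      have hFdiffW : DifferentiableOn ℂ F (W \ {f x}) := by
        rintro y' ⟨⟨x', hx's, rfl⟩, hy'ne⟩
        have hx'ne : x' ≠ x := by
          intro hcon; rw [hcon] at hy'ne; simp at hy'ne
        have := (hdiff_at x' hx's.2 (hsprop x' hx's hx'ne)).hasDerivAt.differentiableAt
        exact this.differentiableWithinAt
      -- boundedness
      have hbdd : BddAbove (norm ∘ F '' (W \ {f x})) := by
        refine ⟨‖z₀‖ + r, ?_⟩
        rintro v ⟨y', hy', rfl⟩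
        have hy'Ω : y' ∈ f '' D := by
          obtain ⟨⟨x', hx's, rfl⟩, _⟩ := hy'
          exact ⟨x', hx's.2, rfl⟩
        have hFD := (hFmem y' hy'Ω).1
        rw [hD, mem_ball, dist_eq_norm] at hFD
        have := norm_sub_norm_le (F y') z₀
        simp only [Function.comp]
        linarith
      have hupd := differentiableOn_update_limUnder_of_bddAbove
        (hWopen.mem_nhds hyW) hFdiffW hbdd
      -- the update equals F
      have hlim : limUnder (𝓝[≠] (f x)) F = F (f x) := by
        have htend : Filter.Tendsto F (𝓝[≠] (f x)) (𝓝 (F (f x))) :=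
          (hFcontAt (f x) ⟨x, hx, rfl⟩).tendsto.mono_left nhdsWithin_le_nhds
        exact htend.limUnder_eq
      rw [hlim, Function.update_eq_self] at hupd
      exact ((hupd.differentiableAt (hWopen.mem_nhds hyW))).differentiableWithinAt
    · exact (hdiff_at x hx hne).hasDerivAt.differentiableAt.differentiableWithinAt
  -- derivative identities
  have hderiv : ∀ z ∈ D, deriv f z ≠ 0 ∧ deriv F (f z) = (deriv f z)⁻¹ := by
    intro z hz
    have hFat : DifferentiableAt ℂ F (f z) :=
      hFdiff.differentiableAt (hΩ.mem_nhds ⟨z, hz, rfl⟩)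
    have hfat : DifferentiableAt ℂ f z := hd.differentiableAt (isOpen_ball.mem_nhds hz)
    have hchain : HasDerivAt (F ∘ f) (deriv F (f z) * deriv f z) z :=
      (hFat.hasDerivAt).comp z (hfat.hasDerivAt)
    have hid : HasDerivAt (F ∘ f) 1 z := by
      have : (F ∘ f) =ᶠ[𝓝 z] id := by
        filter_upwards [hevF z hz] with t ht
        exact ht
      exact (hasDerivAt_id z).congr_of_eventuallyEq this
    have huniq : deriv F (f z) * deriv f z = 1 := hchain.unique hid
    constructor
    · intro hcon
      rw [hcon, mul_zero] at huniq
      exact one_ne_zero huniq.symm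
    · have hcne : deriv f z ≠ 0 := by
        intro hcon
        rw [hcon, mul_zero] at huniq
        exact one_ne_zero huniq.symm
      field_simp
      linear_combination huniq
  exact ⟨F, hFdiff, hΩ, hFleft, fun y hy => (hFmem y hy).1, hderiv⟩

lemma step_lemma {f : ℂ → ℂ} {z w : ℂ} {r : ℝ} (hr : 0 < r)
    (hd : DifferentiableOn ℂ f (ball z r)) (hinj : InjOn f (ball z r))
    (hw : dist w z ≤ r / 2048) :
    ‖deriv f w‖ ≤ 128 * ‖deriv f z‖ := by
  obtain ⟨F, hFd, hΩ, hFleft, hFmaps, hFderiv⟩ := exists_inverse hr hd hinj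
  have hzD : z ∈ ball z r := mem_ball_self hr
  obtain ⟨hfz, hFz'⟩ := hFderiv z hzD
  have habs : 0 < ‖deriv f z‖ := norm_pos_iff.mpr hfz
  set ρ₁ : ℝ := r * ‖deriv f z‖ / 32 with hρ₁
  have hρ₁pos : 0 < ρ₁ := by positivity
  have hB₁ : ball (f z) ρ₁ ⊆ f '' ball z r := koebe hr hd hinj
  have hfF : ∀ y ∈ f '' ball z r, f (F y) = y := by
    rintro y ⟨x, hx, rfl⟩
    rw [hFleft x hx]
  have hFinj : InjOn F (f '' ball z r) := by
    intro y₁ h₁ y₂ h₂ he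
    rw [← hfF y₁ h₁, ← hfF y₂ h₂, he]
  have hcovF := koebe hρ₁pos (hFd.mono hB₁) (hFinj.mono hB₁)
  -- identify the center and radius
  have hFfz : F (f z) = z := hFleft z hzD
  have hradius : ρ₁ * ‖deriv F (f z)‖ / 32 = r / 1024 := by
    rw [hFz', norm_inv, hρ₁]
    field_simp
    ring
  rw [hFfz, hradius] at hcovF
  -- growth bound: f maps ball z (r/1024) into ball (f z) ρ₁
  have hgrow : ∀ x ∈ ball z (r/1024), f x ∈ ball (f z) ρ₁ := by
    intro x hx
    obtain ⟨y, hy, hye⟩ := hcovF hx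
    have hyΩ : y ∈ f '' ball z r := hB₁ hy
    have : f x = y := by rw [← hye, hfF y hyΩ]
    rwa [this]
  -- Schwarz estimate at w
  have hs : (0:ℝ) < r/2048 := by linarith
  have hwz : w ∈ ball z (r/1024) := by
    rw [mem_ball]
    calc dist w z ≤ r/2048 := hw
      _ < r/1024 := by linarith
  have hball_sub : ball w (r/2048) ⊆ ball z (r/1024) := by
    intro x hx
    rw [mem_ball] at hx ⊢
    calc dist x z ≤ dist x w + dist w z := dist_triangle x w z
      _ < r/2048 + r/2048 := by
          apply add_lt_add_of_lt_of_le hx hw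
      _ = r/1024 := by ring
  have hDsub : ball w (r/2048) ⊆ ball z r := by
    apply hball_sub.trans
    apply ball_subset_ball
    linarith
  have hmaps : MapsTo f (ball w (r/2048)) (ball (f w) (r * ‖deriv f z‖ / 16)) := by
    intro x hx
    rw [mem_ball]
    have h1 : f x ∈ ball (f z) ρ₁ := hgrow x (hball_sub hx)
    have h2 : f w ∈ ball (f z) ρ₁ := hgrow w hwz
    rw [mem_ball] at h1 h2
    calc dist (f x) (f w) ≤ dist (f x) (f z) + dist (f z) (f w) := dist_triangle _ _ _
      _ < ρ₁ + ρ₁ := by rw [dist_comm (f z) (f w)]; exact add_lt_add h1 h2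
      _ = r * ‖deriv f z‖ / 16 := by rw [hρ₁]; ring
  have hSchwarz := Complex.norm_deriv_le_div_of_mapsTo_ball (hd.mono hDsub) (hmaps.mono_right ball_subset_closedBall) hs
  calc ‖deriv f w‖ ≤ (r * ‖deriv f z‖ / 16)/(r/2048) := hSchwarz
    _ = 128 * ‖deriv f z‖ := by field_simp; ring

lemma step_on_curve {γ : ℝ → ℂ} {f : ℂ → ℂ} {ε ℓ : ℝ} (hε : 0 < ε) (hℓ : 0 < ℓ)
    (hg : DifferentiableOn ℂ f (Metric.thickening (ε*ℓ) (γ '' Icc 0 1)))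
    (hginj : InjOn f (Metric.thickening (ε*ℓ) (γ '' Icc 0 1)))
    {a s : ℝ} (ha : a ∈ Icc (0:ℝ) 1) (hs : s ∈ Icc (0:ℝ) 1)
    (hdist : dist (γ s) (γ a) ≤ ε*ℓ/2048) :
    ‖deriv f (γ s)‖ ≤ 128 * ‖deriv f (γ a)‖ := by
  have hεℓ : 0 < ε*ℓ := by positivity
  have hmem : γ a ∈ γ '' Icc 0 1 := ⟨a, ha, rfl⟩
  have hball : ball (γ a) (ε*ℓ) ⊆ Metric.thickening (ε*ℓ) (γ '' Icc 0 1) :=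
    ball_subset_thickening hmem (ε*ℓ)
  exact step_lemma hεℓ (hg.mono hball) (hginj.mono hball) hdist

lemma greedy {γ : ℝ → ℂ} (hcont : ContinuousOn γ (Icc 0 1)) {η : ℝ} (hη : 0 < η)
    {a b : ℝ} (ha : a ∈ Icc (0:ℝ) 1) (hb : b ∈ Icc (0:ℝ) 1) (hab : a ≤ b) :
    ∃ t ∈ Icc (0:ℝ) 1, a ≤ t ∧ t ≤ b ∧ (∀ s ∈ Icc a t, dist (γ s) (γ a) ≤ 2*η) ∧
      (t = b ∨ ENNReal.ofReal η ≤ eVariationOn γ (Icc 0 1 ∩ Icc a t)) := by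
  set S : Set ℝ := {t | t ∈ Icc a b ∧ ∀ s ∈ Icc a t, dist (γ s) (γ a) ≤ η} with hS
  have haS : a ∈ S := by
    refine ⟨⟨le_refl a, hab⟩, ?_⟩
    intro s hs
    have : s = a := le_antisymm hs.2 hs.1
    simp [this, hη.le]
  have hSne : S.Nonempty := ⟨a, haS⟩
  have hSbdd : BddAbove S := ⟨b, fun t ht => ht.1.2⟩
  set c : ℝ := sSup S with hc
  have hac : a ≤ c := le_csSup hSbdd haS
  have hcb : c ≤ b := csSup_le hSne (fun t ht => ht.1.2)
  have hc01 : c ∈ Icc (0:ℝ) 1 := ⟨ha.1.trans hac, hcb.trans hb.2⟩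
  -- values strictly below c satisfy the distance bound
  have hf1' : ∀ s, a ≤ s → s < c → dist (γ s) (γ a) ≤ η := by
    intro s has hsc
    obtain ⟨t, htS, hst⟩ := exists_lt_of_lt_csSup hSne hsc
    exact htS.2 s ⟨has, hst.le⟩
  have hf1c : dist (γ c) (γ a) ≤ η := by
    rcases eq_or_lt_of_le hac with heq | hlt
    · rw [← heq]; simp [hη.le]
    · have hmemc : c ∈ closure (Ico a c) := by
        rw [closure_Ico hlt.ne]
        exact ⟨hac, le_refl c⟩
      have hnb : (𝓝[Ico a c] c).NeBot := mem_closure_iff_nhdsWithin_neBot.mp hmemc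
      have hsub : Ico a c ⊆ Icc (0:ℝ) 1 := fun s hs =>
        ⟨ha.1.trans hs.1, (hs.2.le).trans hc01.2⟩
      have htd : Tendsto γ (𝓝[Ico a c] c) (𝓝 (γ c)) :=
        (hcont c hc01).mono_left (nhdsWithin_mono c hsub)
      have htd2 : Tendsto (fun s => dist (γ s) (γ a)) (𝓝[Ico a c] c)
          (𝓝 (dist (γ c) (γ a))) := htd.dist tendsto_const_nhds
      apply le_of_tendsto htd2
      filter_upwards [self_mem_nhdsWithin] with s hs
      exact hf1' s hs.1 hs.2
  have hf1 : ∀ s ∈ Icc a c, dist (γ s) (γ a) ≤ η := by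
    intro s hs
    rcases eq_or_lt_of_le hs.2 with heq | hlt
    · rw [heq]; exact hf1c
    · exact hf1' s hs.1 hlt
  rcases eq_or_lt_of_le hcb with hceqb | hclt
  · refine ⟨b, hb, hab, le_refl b, ?_, Or.inl rfl⟩
    intro s hs
    rw [← hceqb] at hs
    exact (hf1 s hs).trans (by linarith)
  · -- continuity at c gives a point slightly beyond c
    obtain ⟨δ, hδ, hδprop⟩ := Metric.continuousWithinAt_iff.mp (hcont c hc01) η hη
    set t : ℝ := min (c + δ/2) b with htdef
    have hct : c < t := lt_min (by linarith) hclt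
    have htb : t ≤ b := min_le_right _ _
    have hat : a ≤ t := hac.trans hct.le
    have ht01 : t ∈ Icc (0:ℝ) 1 := ⟨ha.1.trans hat, htb.trans hb.2⟩
    have hbound : ∀ s ∈ Icc a t, dist (γ s) (γ a) ≤ 2*η := by
      intro s hs
      rcases le_or_gt s c with hsc | hcs
      · exact (hf1 s ⟨hs.1, hsc⟩).trans (by linarith)
      · have hs01 : s ∈ Icc (0:ℝ) 1 := ⟨ha.1.trans hs.1, hs.2.trans ht01.2⟩
        have hdistsc : dist s c < δ := by
          rw [Real.dist_eq, abs_of_pos (by linarith : (0:ℝ) < s - c)]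
          have : s ≤ c + δ/2 := hs.2.trans (min_le_left _ _)
          linarith
        have h1 : dist (γ s) (γ c) < η := hδprop hs01 hdistsc
        calc dist (γ s) (γ a) ≤ dist (γ s) (γ c) + dist (γ c) (γ a) := dist_triangle _ _ _
          _ ≤ η + η := add_le_add h1.le hf1c
          _ = 2*η := by ring
    -- t is not in S, so there is an escape point
    have htnS : t ∉ S := by
      intro htS
      exact absurd (le_csSup hSbdd htS) (not_le.mpr hct)
    have hesc : ∃ s₁ ∈ Icc a t, η < dist (γ s₁) (γ a) := by
      by_contra hcon
      push_neg at hcon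
      exact htnS ⟨⟨hat, htb⟩, fun s hs => hcon s hs⟩
    obtain ⟨s₁, hs₁mem, hs₁⟩ := hesc
    have hs₁01 : s₁ ∈ Icc (0:ℝ) 1 := ⟨ha.1.trans hs₁mem.1, hs₁mem.2.trans ht01.2⟩
    have hvarlow : ENNReal.ofReal η ≤ eVariationOn γ (Icc 0 1 ∩ Icc a t) := by
      have h1 : edist (γ s₁) (γ a) ≤ eVariationOn γ (Icc 0 1 ∩ Icc a t) :=
        eVariationOn.edist_le γ ⟨hs₁01, hs₁mem⟩ ⟨ha, ⟨le_refl a, hat⟩⟩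
      refine le_trans ?_ h1
      rw [edist_dist]
      exact ENNReal.ofReal_le_ofReal hs₁.le
    exact ⟨t, ht01, hat, htb, hbound, Or.inr hvarlow⟩

lemma chain (n : ℕ) {γ : ℝ → ℂ} {f : ℂ → ℂ} {ε ℓ : ℝ} (hε : 0 < ε) (hℓ : 0 < ℓ)
    (hcont : ContinuousOn γ (Icc 0 1))
    (hg : DifferentiableOn ℂ f (Metric.thickening (ε*ℓ) (γ '' Icc 0 1)))
    (hginj : InjOn f (Metric.thickening (ε*ℓ) (γ '' Icc 0 1)))
    {a b : ℝ} (ha : a ∈ Icc (0:ℝ) 1) (hb : b ∈ Icc (0:ℝ) 1) (hab : a ≤ b)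
    (hvar : eVariationOn γ (Icc 0 1 ∩ Icc a b) < ((n:ℝ≥0∞)+1) * ENNReal.ofReal (ε*ℓ/4096)) :
    ‖deriv f (γ b)‖ ≤ 128^(n+1) * ‖deriv f (γ a)‖ ∧
    ‖deriv f (γ a)‖ ≤ 128^(n+1) * ‖deriv f (γ b)‖ := by
  have hη : (0:ℝ) < ε*ℓ/4096 := by positivity
  induction n generalizing a b with
  | zero =>
    obtain ⟨t, ht01, hat, htb, hbound, halt⟩ := greedy hcont hη ha hb hab
    rcases halt with rfl | hvarlow
    · -- single step
      have hdist : dist (γ t) (γ a) ≤ ε*ℓ/2048 := by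
        have := hbound t ⟨hat, le_refl t⟩
        linarith
      constructor
      · simpa using step_on_curve hε hℓ hg hginj ha ht01 hdist
      · have : dist (γ a) (γ t) ≤ ε*ℓ/2048 := by rwa [dist_comm]
        simpa using step_on_curve hε hℓ hg hginj ht01 ha this
    · exfalso
      have hmono : eVariationOn γ (Icc 0 1 ∩ Icc a t) ≤ eVariationOn γ (Icc 0 1 ∩ Icc a b) :=
        eVariationOn.mono γ (inter_subset_inter_right _ (Icc_subset_Icc (le_refl a) htb))
      have := hvarlow.trans hmono
      simp only [Nat.cast_zero, zero_add, one_mul] at hvar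
      exact absurd hvar (not_lt.mpr this)
  | succ m ih =>
    obtain ⟨t, ht01, hat, htb, hbound, halt⟩ := greedy hcont hη ha hb hab
    have hdist : dist (γ t) (γ a) ≤ ε*ℓ/2048 := by
      have := hbound t ⟨hat, le_refl t⟩
      linarith
    have hstep1 : ‖deriv f (γ t)‖ ≤ 128 * ‖deriv f (γ a)‖ :=
      step_on_curve hε hℓ hg hginj ha ht01 hdist
    have hstep2 : ‖deriv f (γ a)‖ ≤ 128 * ‖deriv f (γ t)‖ :=
      step_on_curve hε hℓ hg hginj ht01 ha (by rwa [dist_comm])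
    rcases halt with rfl | hvarlow
    · -- single step suffices
      have hpow : (128:ℝ) ≤ 128^(m+1+1) := by
        calc (128:ℝ) = 128^1 := (pow_one _).symm
        _ ≤ 128^(m+1+1) := pow_le_pow_right₀ (by norm_num) (by omega)
      constructor
      · exact hstep1.trans (mul_le_mul_of_nonneg_right hpow (norm_nonneg _))
      · exact hstep2.trans (mul_le_mul_of_nonneg_right hpow (norm_nonneg _))
    · -- recurse on [t, b]
      have hsplit := eVariationOn.Icc_add_Icc γ hat htb ht01
      have hne : ENNReal.ofReal (ε*ℓ/4096) ≠ ⊤ := ENNReal.ofReal_ne_top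
      have hvar' : eVariationOn γ (Icc 0 1 ∩ Icc t b) <
          ((m:ℝ≥0∞)+1) * ENNReal.ofReal (ε*ℓ/4096) := by
        have h1 : eVariationOn γ (Icc 0 1 ∩ Icc t b) + ENNReal.ofReal (ε*ℓ/4096) ≤
            eVariationOn γ (Icc 0 1 ∩ Icc a b) := by
          rw [← hsplit]
          rw [add_comm]
          exact add_le_add hvarlow (le_refl _)
        have h2 : eVariationOn γ (Icc 0 1 ∩ Icc t b) + ENNReal.ofReal (ε*ℓ/4096) <
            ((m:ℝ≥0∞)+1) * ENNReal.ofReal (ε*ℓ/4096) + ENNReal.ofReal (ε*ℓ/4096) := by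
          apply lt_of_le_of_lt h1
          apply lt_of_lt_of_le hvar
          apply le_of_eq
          push_cast
          ring
        exact (ENNReal.add_lt_add_iff_right hne).mp h2
      obtain ⟨ih1, ih2⟩ := ih ht01 hb htb hvar'
      constructor
      · calc ‖deriv f (γ b)‖ ≤ 128^(m+1) * ‖deriv f (γ t)‖ := ih1
          _ ≤ 128^(m+1) * (128 * ‖deriv f (γ a)‖) := by
              apply mul_le_mul_of_nonneg_left hstep1 (by positivity)
          _ = 128^(m+1+1) * ‖deriv f (γ a)‖ := by ring
      · calc ‖deriv f (γ a)‖ ≤ 128 * ‖deriv f (γ t)‖ := hstep2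
          _ ≤ 128 * (128^(m+1) * ‖deriv f (γ b)‖) := by
              apply mul_le_mul_of_nonneg_left ih2 (by norm_num)
          _ = 128^(m+1+1) * ‖deriv f (γ b)‖ := by ring

end Stmt1Aux

/-- for every `ε > 0` there is a constant `C ≥ 1`, depending only on
`ε`, such that any holomorphic injective map `g` defined on the `εℓ`-neighborhood
of (the image of) a rectifiable curve `γ` of length `ℓ > 0` has distortion at most
`C` on the image of the curve: `|g'(u)| ≤ C |g'(v)|` for all `u, v` on the curve. -/
theorem stmt1 (ε : ℝ) (hε : 0 < ε) :
    ∃ C : ℝ, 1 ≤ C ∧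
      ∀ (γ : ℝ → ℂ) (ℓ : ℝ),
        ContinuousOn γ (Set.Icc 0 1) →
        BoundedVariationOn γ (Set.Icc 0 1) →
        (eVariationOn γ (Set.Icc 0 1)).toReal = ℓ →
        0 < ℓ →
        ∀ g : ℂ → ℂ,
          DifferentiableOn ℂ g (Metric.thickening (ε * ℓ) (γ '' Set.Icc 0 1)) →
          Set.InjOn g (Metric.thickening (ε * ℓ) (γ '' Set.Icc 0 1)) →
          ∀ u ∈ γ '' Set.Icc 0 1, ∀ v ∈ γ '' Set.Icc 0 1,
            ‖deriv g u‖ ≤ C * ‖deriv g v‖ := by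
  set N : ℕ := ⌈4096/ε⌉₊ with hN
  refine ⟨128^(N+1), ?_, ?_⟩
  · calc (1:ℝ) = 1^(N+1) := (one_pow _).symm
      _ ≤ 128^(N+1) := by
        apply pow_le_pow_left₀ (by norm_num) (by norm_num)
  intro γ ℓ hcont hbv hvar hℓ g hg hginj u hu v hv
  obtain ⟨tu, htu, rfl⟩ := hu
  obtain ⟨tv, htv, rfl⟩ := hv
  have htotal : eVariationOn γ (Icc 0 1) = ENNReal.ofReal ℓ := by
    rw [← hvar]
    exact (ENNReal.ofReal_toReal hbv).symm
  have hηpos : (0:ℝ) < ε*ℓ/4096 := by positivity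
  have hrhspos : (0:ℝ) < ((N:ℝ)+1) * (ε*ℓ/4096) := by positivity
  have hreal : ℓ < ((N:ℝ)+1) * (ε*ℓ/4096) := by
    have hNbig : 4096/ε < (N:ℝ)+1 := lt_of_le_of_lt (Nat.le_ceil _) (lt_add_one _)
    have h1 : 4096 < ((N:ℝ)+1)*ε := by
      rw [div_lt_iff₀ hε] at hNbig
      linarith
    have h2 : 4096*ℓ < ((N:ℝ)+1)*ε*ℓ := by
      apply mul_lt_mul_of_pos_right h1 hℓ
    calc ℓ = 4096*ℓ/4096 := by ring
      _ < ((N:ℝ)+1)*ε*ℓ/4096 := by linarith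
      _ = ((N:ℝ)+1) * (ε*ℓ/4096) := by ring
  have hkey : ∀ a b : ℝ, a ∈ Icc (0:ℝ) 1 → b ∈ Icc (0:ℝ) 1 → a ≤ b →
      eVariationOn γ (Icc 0 1 ∩ Icc a b) < ((N:ℝ≥0∞)+1) * ENNReal.ofReal (ε*ℓ/4096) := by
    intro a b _ _ _
    calc eVariationOn γ (Icc 0 1 ∩ Icc a b) ≤ eVariationOn γ (Icc 0 1) :=
          eVariationOn.mono γ inter_subset_left
      _ = ENNReal.ofReal ℓ := htotal
      _ < ((N:ℝ≥0∞)+1) * ENNReal.ofReal (ε*ℓ/4096) := by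
          have hcast : ((N:ℝ≥0∞)+1) * ENNReal.ofReal (ε*ℓ/4096) =
              ENNReal.ofReal (((N:ℝ)+1) * (ε*ℓ/4096)) := by
            rw [ENNReal.ofReal_mul (by positivity)]
            congr 1
            rw [ENNReal.ofReal_add (by positivity) zero_le_one]
            simp [ENNReal.ofReal_natCast]
          rw [hcast]
          exact (ENNReal.ofReal_lt_ofReal_iff hrhspos).mpr hreal
  rcases le_total tu tv with hle | hle
  · exact (Stmt1Aux.chain N hε hℓ hcont hg hginj htu htv hle (hkey tu tv htu htv hle)).2
  · exact (Stmt1Aux.chain N hε hℓ hcont hg hginj htv htu hle (hkey tv tu htv htu hle)).1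
end
end

section
/- Let N_f(z) = z − tan(z). For every k ∈ ℤ and every t ∈ ℝ with t ≠ 0, one has cos(π/2 + kπ + it) ≠ 0 and N_f(π/2 + kπ + it) = π/2 + kπ + i(t − coth t). In particular, the vertical lines {z ∈ ℂ : Re(z) = π/2 + kπ}, with the real pole removed, are invariant under N_f. -/
open Complex

lemma stmt3_aux_cos (k : ℤ) : Complex.cos ((k : ℂ) * (Real.pi : ℂ)) = (-1) ^ k := by
  have h : Real.cos ((0 : ℝ) + (k : ℝ) * Real.pi) = (-1) ^ k * Real.cos 0 :=
    Real.cos_add_int_mul_pi 0 k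
  simp only [zero_add, Real.cos_zero, mul_one] at h
  calc Complex.cos ((k : ℂ) * (Real.pi : ℂ))
      = ((Real.cos ((k : ℝ) * Real.pi) : ℝ) : ℂ) := by
        rw [Complex.ofReal_cos]; push_cast; ring_nf
    _ = (-1) ^ k := by rw [h]; push_cast; ring

lemma stmt3_aux_base_cos (k : ℤ) :
    Complex.cos ((Real.pi : ℂ) / 2 + (k : ℂ) * (Real.pi : ℂ)) = 0 := by
  rw [Complex.cos_add, Complex.cos_pi_div_two, Complex.sin_pi_div_two,
    Complex.sin_int_mul_pi]
  ring

lemma stmt3_aux_base_sin (k : ℤ) :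
    Complex.sin ((Real.pi : ℂ) / 2 + (k : ℂ) * (Real.pi : ℂ)) = (-1) ^ k := by
  rw [Complex.sin_add, Complex.cos_pi_div_two, Complex.sin_pi_div_two,
    Complex.sin_int_mul_pi, stmt3_aux_cos]
  ring

/-- for `N_f(z) = z - tan z`, every `k ∈ ℤ` and real `t ≠ 0`,
`cos(π/2 + kπ + it) ≠ 0` and `N_f(π/2 + kπ + it) = π/2 + kπ + i(t - coth t)`. -/
theorem stmt3 (k : ℤ) (t : ℝ) (ht : t ≠ 0) :
    Complex.cos ((Real.pi : ℂ) / 2 + (k : ℂ) * (Real.pi : ℂ) + (t : ℂ) * Complex.I) ≠ 0 ∧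
    ((Real.pi : ℂ) / 2 + (k : ℂ) * (Real.pi : ℂ) + (t : ℂ) * Complex.I) -
        Complex.tan ((Real.pi : ℂ) / 2 + (k : ℂ) * (Real.pi : ℂ) + (t : ℂ) * Complex.I) =
      (Real.pi : ℂ) / 2 + (k : ℂ) * (Real.pi : ℂ) +
        ((t - Real.cosh t / Real.sinh t : ℝ) : ℂ) * Complex.I := by
  have hsinh : Real.sinh t ≠ 0 := by
    simpa [Real.sinh_eq_zero] using ht
  have hsinhC : (Real.sinh t : ℂ) ≠ 0 := by exact_mod_cast hsinh
  have hneg : ((-1 : ℂ)) ^ k ≠ 0 := by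
    apply zpow_ne_zero; norm_num
  have hcos : Complex.cos ((Real.pi : ℂ) / 2 + (k : ℂ) * (Real.pi : ℂ) + (t : ℂ) * Complex.I)
      = -((-1) ^ k * (Real.sinh t : ℂ) * Complex.I) := by
    rw [Complex.cos_add_mul_I, stmt3_aux_base_cos, stmt3_aux_base_sin,
      ← Complex.ofReal_sinh]
    ring
  have hsin : Complex.sin ((Real.pi : ℂ) / 2 + (k : ℂ) * (Real.pi : ℂ) + (t : ℂ) * Complex.I)
      = (-1) ^ k * (Real.cosh t : ℂ) := by
    rw [Complex.sin_add_mul_I, stmt3_aux_base_cos, stmt3_aux_base_sin,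
      ← Complex.ofReal_cosh]
    ring
  have hcosne : Complex.cos ((Real.pi : ℂ) / 2 + (k : ℂ) * (Real.pi : ℂ) + (t : ℂ) * Complex.I) ≠ 0 := by
    rw [hcos]
    simp only [neg_ne_zero]
    exact mul_ne_zero (mul_ne_zero hneg hsinhC) Complex.I_ne_zero
  refine ⟨hcosne, ?_⟩
  have htan : Complex.tan ((Real.pi : ℂ) / 2 + (k : ℂ) * (Real.pi : ℂ) + (t : ℂ) * Complex.I)
      = (Real.cosh t : ℂ) / (Real.sinh t : ℂ) * Complex.I := by
    rw [Complex.tan_eq_sin_div_cos, hsin, hcos,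
      div_eq_iff (by simpa using mul_ne_zero (mul_ne_zero hneg hsinhC) Complex.I_ne_zero)]
    field_simp
    ring_nf
    simp only [Complex.I_sq]
    ring_nf
  rw [htan]
  push_cast
  field_simp
  ring
end

section
/- Let N_g(z) = z + i + tan(z). For every k ∈ ℤ and every t ∈ ℝ with t ≠ 0, one has cos(π/2 + kπ + it) ≠ 0 and N_g(π/2 + kπ + it) = π/2 + kπ + i(t + 1 + coth t). Moreover, for every t < 0 one has t + 1 + coth t < t < 0; in particular, on the lower half-lines {Re(z) = π/2 + kπ, Im(z) < 0} the imaginary part strictly decreases under N_g. -/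
lemma coshelper {t : ℝ} (ht : t < 0) : 1 + Real.cosh t / Real.sinh t < 0 := by
  have hs : Real.sinh t < 0 := by
    rwa [show (0:ℝ) = Real.sinh 0 by simp, Real.sinh_lt_sinh]
  have h1 : 1 + Real.cosh t / Real.sinh t = Real.exp t / Real.sinh t := by
    rw [← Real.sinh_add_cosh]
    field_simp [hs.ne]
  rw [h1]
  exact div_neg_of_pos_of_neg (Real.exp_pos t) hs

lemma cos_int_pi (k : ℤ) : Complex.cos ((k:ℂ) * Real.pi) = (-1)^k := by
  have h : Real.cos ((k:ℝ) * Real.pi) = (-1)^k := by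
    simpa using Real.cos_int_mul_pi_sub 0 k
  rw [show ((k:ℂ) * (Real.pi:ℂ)) = (((k:ℝ) * Real.pi : ℝ) : ℂ) by push_cast; ring,
    ← Complex.ofReal_cos, h]
  push_cast
  ring

/-- for `N_g(z) = z + i + tan z`, every `k ∈ ℤ` and real `t ≠ 0`,
`cos(π/2 + kπ + it) ≠ 0` and `N_g(π/2 + kπ + it) = π/2 + kπ + i(t + 1 + coth t)`;
moreover for `t < 0` one has `t + 1 + coth t < t < 0`. -/
theorem stmt6 :
    (∀ (k : ℤ) (t : ℝ), t ≠ 0 →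
      Complex.cos ((Real.pi : ℂ) / 2 + (k : ℂ) * (Real.pi : ℂ) + (t : ℂ) * Complex.I) ≠ 0 ∧
      ((Real.pi : ℂ) / 2 + (k : ℂ) * (Real.pi : ℂ) + (t : ℂ) * Complex.I) + Complex.I +
          Complex.tan ((Real.pi : ℂ) / 2 + (k : ℂ) * (Real.pi : ℂ) + (t : ℂ) * Complex.I) =
        (Real.pi : ℂ) / 2 + (k : ℂ) * (Real.pi : ℂ) +
          ((t + 1 + Real.cosh t / Real.sinh t : ℝ) : ℂ) * Complex.I) ∧
    (∀ t : ℝ, t < 0 →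
      t + 1 + Real.cosh t / Real.sinh t < t ∧ t + 1 + Real.cosh t / Real.sinh t < 0) := by
  constructor
  · intro k t ht
    set z : ℂ := (Real.pi : ℂ) / 2 + (k : ℂ) * (Real.pi : ℂ) + (t : ℂ) * Complex.I with hz
    have hsinh : Real.sinh t ≠ 0 := by
      simpa [Real.sinh_eq_zero] using ht
    have hsinhC : Complex.sinh (t : ℂ) ≠ 0 := by
      rw [← Complex.ofReal_sinh]
      exact_mod_cast hsinh
    have hcos0 : Complex.cos ((Real.pi : ℂ) / 2 + (k : ℂ) * Real.pi) = 0 := by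
      rw [Complex.cos_add, Complex.cos_pi_div_two, Complex.sin_pi_div_two,
        Complex.sin_int_mul_pi]
      ring
    have hsin1 : Complex.sin ((Real.pi : ℂ) / 2 + (k : ℂ) * Real.pi) = (-1)^k := by
      rw [Complex.sin_add, Complex.cos_pi_div_two, Complex.sin_pi_div_two, cos_int_pi]
      ring
    have hne : ((-1:ℂ))^k ≠ 0 := by
      apply zpow_ne_zero; norm_num
    have hcos : Complex.cos z = -((-1)^k * Complex.sinh (t:ℂ)) * Complex.I := by
      rw [hz, Complex.cos_add, hcos0, hsin1, Complex.sin_mul_I]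
      ring
    have hsin : Complex.sin z = (-1)^k * Complex.cosh (t:ℂ) := by
      rw [hz, Complex.sin_add, hcos0, hsin1, Complex.cos_mul_I]
      ring
    have hcne : Complex.cos z ≠ 0 := by
      rw [hcos]
      simp only [neg_mul, neg_ne_zero, mul_ne_zero_iff]
      exact ⟨⟨hne, hsinhC⟩, Complex.I_ne_zero⟩
    refine ⟨hcne, ?_⟩
    rw [Complex.tan_eq_sin_div_cos, hsin, hcos]
    rw [Complex.ofReal_add, Complex.ofReal_add, Complex.ofReal_div,
      Complex.ofReal_cosh, Complex.ofReal_sinh, Complex.ofReal_one]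
    have hI : Complex.I ≠ 0 := Complex.I_ne_zero
    field_simp
    ring_nf
    rw [Complex.I_sq]
    rw [hz]
    linear_combination (2 * Complex.sinh ↑t * ↑t) * Complex.I_sq
  · intro t ht
    have h := coshelper ht
    constructor <;> nlinarith
end

section
/- Let α, β ∈ ℂ with β ≠ 0, h(z) = e^z + βz + α and N_h(z) = z − h(z)/h'(z). There exist constants C > 1 and R > 0 such that for every w ∈ ℂ with h(w) = 0 and |w| > R, and every z ∈ ℂ with |z − w| < 1, one has h'(z) = e^z + β ≠ 0 and |N_h''(z)| ≤ C, where N_h''(z) = h''(z)/h'(z) + h(z)h'''(z)/(h'(z))² − 2h(z)(h''(z))²/(h'(z))³. -/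
private lemma tri3 (x y c : ℂ) :
    ‖x + y - c‖ ≤ ‖x‖ + ‖y‖ + ‖c‖ := by
  have h1 := norm_add_le (x + y) (-c)
  have h2 := norm_add_le x y
  rw [norm_neg, ← sub_eq_add_neg] at h1
  linarith

/-- for `h(z) = e^z + βz + α` with `β ≠ 0` there exist `C > 1` and
`R > 0` such that for every zero `w` of `h` with `|w| > R` and every `z` with
`|z - w| < 1`, one has `h'(z) = e^z + β ≠ 0` and `|N_h''(z)| ≤ C`. -/
theorem stmt10 (α β : ℂ) (hβ : β ≠ 0) :
    ∃ C > (1 : ℝ), ∃ R > (0 : ℝ), ∀ w : ℂ,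
      Complex.exp w + β * w + α = 0 → ‖w‖ > R →
      ∀ z : ℂ, ‖z - w‖ < 1 →
        Complex.exp z + β ≠ 0 ∧
        ‖(Complex.exp z / (Complex.exp z + β) +
            (Complex.exp z + β * z + α) * Complex.exp z / (Complex.exp z + β) ^ 2 -
            2 * (Complex.exp z + β * z + α) * (Complex.exp z) ^ 2 /
              (Complex.exp z + β) ^ 3)‖ ≤ C := by
  have e1 : (0:ℝ) < Real.exp 1 := Real.exp_pos 1
  set A := ‖α‖ with hAdef
  set B := ‖β‖ with hBdef
  have hB : 0 < B := norm_pos_iff.mpr hβ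
  have hA0 : 0 ≤ A := norm_nonneg α
  set K := 2*A + B with hKdef
  set M := max (max (2*B) K) 1 with hMdef
  have hM1 : (1:ℝ) ≤ M := le_max_right _ _
  have hMB : 2*B ≤ M := le_trans (le_max_left _ _) (le_max_left _ _)
  have hMK : K ≤ M := le_trans (le_max_right _ _) (le_max_left _ _)
  clear_value A B K M
  refine ⟨50 + 20*Real.exp 1, by linarith, (Real.exp 1 * M + A)/B,
    div_pos (by nlinarith) hB, ?_⟩
  intro w hw hwR z hz
  have hew : Complex.exp w = -(β*w + α) := by linear_combination hw
  set W := ‖Complex.exp w‖ with hWdef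
  set E := ‖Complex.exp z‖ with hEdef
  have hW0 : 0 ≤ W := norm_nonneg _
  have hE0 : 0 ≤ E := norm_nonneg _
  clear_value W E
  have hEwlb : B * ‖w‖ - A ≤ W := by
    have h1 := norm_add_le (β*w + α) (-α)
    have h2 : β*w + α + -α = β*w := by ring
    rw [h2, norm_neg, norm_mul, ← hBdef, ← hAdef] at h1
    rw [hWdef, hew, norm_neg]
    linarith
  have hBw : Real.exp 1 * M + A < B * ‖w‖ := by
    have := (div_lt_iff₀ hB).mp hwR
    linarith
  have hWlb : Real.exp 1 * M < W := by linarith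
  have hzw : Complex.exp z = Complex.exp w * Complex.exp (z - w) := by
    rw [← Complex.exp_add]; ring_nf
  have hwz : Complex.exp w = Complex.exp z * Complex.exp (w - z) := by
    rw [← Complex.exp_add]; ring_nf
  have hre1 : -1 ≤ (z - w).re := by
    have h1 := Complex.abs_re_le_norm (z - w)
    have h2 := neg_abs_le ((z - w).re)
    linarith [hz.le]
  have hre2 : (w - z).re ≤ 1 := by
    have h1 := Complex.abs_re_le_norm (z - w)
    have h2 : (w - z).re = -((z - w).re) := by
      rw [Complex.sub_re, Complex.sub_re]; ring
    have h3 := le_abs_self (-((z-w).re))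
    rw [abs_neg] at h3
    linarith [hz.le]
  have hEW : E = W * Real.exp ((z - w).re) := by
    rw [hEdef, hWdef, hzw, norm_mul, Complex.norm_exp (z - w)]
  have hWE : W ≤ E * Real.exp 1 := by
    rw [hWdef, hwz, norm_mul, Complex.norm_exp (w - z), ← hEdef]
    exact mul_le_mul_of_nonneg_left (Real.exp_le_exp.mpr hre2) hE0
  have hexp11 : Real.exp 1 * Real.exp (-1) = 1 := by
    rw [← Real.exp_add]; norm_num
  have hElb : M ≤ E := by
    have h1 : Real.exp (-1) ≤ Real.exp ((z - w).re) := Real.exp_le_exp.mpr hre1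
    have h2 : Real.exp 1 * M * Real.exp (-1) ≤ W * Real.exp ((z - w).re) :=
      mul_le_mul hWlb.le h1 (Real.exp_pos _).le hW0
    rw [hEW]
    nlinarith
  have hE1 : (1:ℝ) ≤ E := le_trans hM1 hElb
  set D := ‖Complex.exp z + β‖ with hDdef
  clear_value D
  have hDlb : E / 2 ≤ D := by
    have h1 := norm_add_le (Complex.exp z + β) (-β)
    have h2 : Complex.exp z + β + -β = Complex.exp z := by ring
    rw [h2, norm_neg] at h1
    have hBE : 2*B ≤ E := le_trans hMB hElb
    linarith [hDdef, hEdef, hBdef]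
  have hD0 : (0:ℝ) < D := by linarith
  have hne : Complex.exp z + β ≠ 0 := by
    intro h
    rw [hDdef, h, norm_zero] at hD0
    exact lt_irrefl 0 hD0
  refine ⟨hne, ?_⟩
  set Hv := ‖Complex.exp z + β*z + α‖ with hHvdef
  have hHv0 : 0 ≤ Hv := norm_nonneg _
  clear_value Hv
  have hzabs : ‖z‖ ≤ ‖w‖ + 1 := by
    have h1 := norm_add_le (z - w) w
    have h2 : z - w + w = z := by ring
    rw [h2] at h1
    linarith [hz.le]
  have hHv : Hv ≤ (2 + Real.exp 1) * E := by
    have h1 := norm_add_le (Complex.exp z + β*z) α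
    have h2 := norm_add_le (Complex.exp z) (β*z)
    rw [norm_mul] at h2
    have h3 : B * ‖z‖ ≤ B * (‖w‖ + 1) :=
      mul_le_mul_of_nonneg_left hzabs hB.le
    have h5 : K ≤ E := le_trans hMK hElb
    nlinarith [h1, h2, h3, hEwlb, hWE, h5, hHvdef, hEdef, hAdef, hBdef, hKdef]
  have t1 : ‖Complex.exp z / (Complex.exp z + β)‖ = E / D := by
    rw [hEdef, hDdef, norm_div]
  have t2 : ‖(Complex.exp z + β * z + α) * Complex.exp z /
      (Complex.exp z + β) ^ 2‖ = Hv * E / D ^ 2 := by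
    rw [hHvdef, hEdef, hDdef, norm_div, norm_mul, norm_pow]
  have t3 : ‖2 * (Complex.exp z + β * z + α) * (Complex.exp z) ^ 2 /
      (Complex.exp z + β) ^ 3‖ = 2 * Hv * E ^ 2 / D ^ 3 := by
    rw [hHvdef, hEdef, hDdef, norm_div, norm_mul, norm_mul, norm_pow, norm_pow,
      Complex.norm_two]
  have tri := tri3 (Complex.exp z / (Complex.exp z + β))
    ((Complex.exp z + β * z + α) * Complex.exp z / (Complex.exp z + β) ^ 2)
    (2 * (Complex.exp z + β * z + α) * (Complex.exp z) ^ 2 / (Complex.exp z + β) ^ 3)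
  rw [t1, t2, t3] at tri
  have hD2 : E^2/4 ≤ D^2 := by
    have h := pow_le_pow_left₀ (by positivity : (0:ℝ) ≤ E/2) hDlb 2
    calc E^2/4 = (E/2)^2 := by ring
      _ ≤ D^2 := h
  have hD3 : E^3/8 ≤ D^3 := by
    have h := pow_le_pow_left₀ (by positivity : (0:ℝ) ≤ E/2) hDlb 3
    calc E^3/8 = (E/2)^3 := by ring
      _ ≤ D^3 := h
  have b1 : E / D ≤ 2 := by
    rw [div_le_iff₀ hD0]; linarith
  have b2 : Hv * E / D ^ 2 ≤ 4 * (2 + Real.exp 1) := by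
    rw [div_le_iff₀ (pow_pos hD0 2)]
    have h1 : Hv * E ≤ (2 + Real.exp 1) * E * E :=
      mul_le_mul_of_nonneg_right hHv hE0
    have h2 : 4 * (2 + Real.exp 1) * (E^2/4) ≤ 4 * (2 + Real.exp 1) * D^2 :=
      mul_le_mul_of_nonneg_left hD2 (by positivity)
    linarith [h1, h2]
  have b3 : 2 * Hv * E ^ 2 / D ^ 3 ≤ 16 * (2 + Real.exp 1) := by
    rw [div_le_iff₀ (pow_pos hD0 3)]
    have h1 : Hv * E^2 ≤ (2 + Real.exp 1) * E * E^2 :=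
      mul_le_mul_of_nonneg_right hHv (by positivity)
    have h2 : 16 * (2 + Real.exp 1) * (E^3/8) ≤ 16 * (2 + Real.exp 1) * D^3 :=
      mul_le_mul_of_nonneg_left hD3 (by positivity)
    linarith [h1, h2]
  linarith [tri, b1, b2, b3]
end

section
/- Let α, β ∈ ℂ with β ≠ 0, h(z) = e^z + βz + α and N_h(z) = z − h(z)/h'(z). There exist constants r > 0 and R > 0 such that for every w ∈ ℂ with h(w) = 0 and |w| > R, and every z ∈ ℂ with |z − w| < r, one has h'(z) = e^z + β ≠ 0 and |N_h'(z)| < 1, where N_h'(z) = h(z)h''(z)/(h'(z))². -/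
/-- for `h(z) = e^z + βz + α` with `β ≠ 0` there exist `r > 0` and
`R > 0` such that for every zero `w` of `h` with `|w| > R` and every `z` with
`|z - w| < r`, one has `h'(z) = e^z + β ≠ 0` and `|N_h'(z)| < 1`, where
`N_h'(z) = h(z)h''(z)/(h'(z))²`. -/
theorem stmt11 (α β : ℂ) (hβ : β ≠ 0) :
    ∃ r > (0 : ℝ), ∃ R > (0 : ℝ), ∀ w : ℂ,
      Complex.exp w + β * w + α = 0 → ‖w‖ > R →
      ∀ z : ℂ, ‖z - w‖ < r →
        Complex.exp z + β ≠ 0 ∧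
        ‖(Complex.exp z + β * z + α) * Complex.exp z / (Complex.exp z + β) ^ 2‖ < 1 := by
  set b := ‖β‖ with hbdef
  have hb0 : 0 < b := norm_pos_iff.mpr hβ
  refine ⟨1/10, by norm_num, (4*b + 1 + ‖α‖)/b, by positivity, ?_⟩
  intro w hw hwR z hz
  set M := ‖Complex.exp w‖ with hMdef
  have hexpw : Complex.exp w = -(β*w+α) := by linear_combination hw
  have hM : M = ‖β*w+α‖ := by rw [hMdef, hexpw, norm_neg]
  have hM4 : 4*b + 1 < M := by
    rw [gt_iff_lt, div_lt_iff₀ hb0] at hwR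
    have h1 : ‖β*w‖ ≤ ‖β*w+α‖ + ‖α‖ := by
      calc ‖β*w‖ = ‖(β*w+α) + (-α)‖ := by ring_nf
        _ ≤ ‖β*w+α‖ + ‖-α‖ := norm_add_le _ _
        _ = ‖β*w+α‖ + ‖α‖ := by rw [norm_neg]
    rw [norm_mul] at h1
    rw [hM]
    nlinarith [norm_nonneg α]
  have hre : |(z-w).re| ≤ ‖z-w‖ := Complex.abs_re_le_norm _
  have habs : ‖z-w‖ < 1/10 := hz
  -- bounds on |exp(z-w)|
  have hA1 : ‖Complex.exp (z-w)‖ ≤ 10/9 := by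
    rw [Complex.norm_exp]
    have h2 : Real.exp (z-w).re ≤ Real.exp (1/10) := by
      apply Real.exp_le_exp.2
      have := abs_le.mp hre
      linarith
    have h3 : (9:ℝ)/10 ≤ Real.exp (-(1/10)) := by
      have := Real.add_one_le_exp (-(1/10 : ℝ)); linarith
    have h4 : Real.exp (1/10) * Real.exp (-(1/10)) = 1 := by
      rw [← Real.exp_add]; norm_num
    nlinarith [Real.exp_pos (1/10 : ℝ), Real.exp_pos (-(1/10) : ℝ)]
  have hA2 : (9:ℝ)/10 ≤ ‖Complex.exp (z-w)‖ := by
    rw [Complex.norm_exp]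
    have h3 : Real.exp (-(1/10)) ≤ Real.exp (z-w).re := by
      apply Real.exp_le_exp.2
      have := abs_le.mp hre
      linarith
    have := Real.add_one_le_exp (-(1/10 : ℝ))
    linarith
  have hE : Complex.exp z = Complex.exp w * Complex.exp (z-w) := by
    rw [← Complex.exp_add]; ring_nf
  have hez_ub : ‖Complex.exp z‖ ≤ 10/9 * M := by
    rw [hE, norm_mul]
    have := norm_nonneg (Complex.exp w)
    nlinarith
  have hez_lb : (9:ℝ)/10 * M ≤ ‖Complex.exp z‖ := by
    rw [hE, norm_mul]
    have := norm_nonneg (Complex.exp w)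
    nlinarith
  -- numerator bound
  have hnum : ‖Complex.exp z - Complex.exp w‖ ≤ M/5 := by
    have h5 : Complex.exp z - Complex.exp w = Complex.exp w * (Complex.exp (z-w) - 1) := by
      rw [hE]; ring
    rw [h5, norm_mul]
    have h6 : ‖Complex.exp (z-w) - 1‖ ≤ 2 * ‖z-w‖ :=
      Complex.norm_exp_sub_one_le (by linarith)
    have := norm_nonneg (Complex.exp w)
    nlinarith
  have hh : ‖Complex.exp z + β*z + α‖ ≤ M/5 + b/10 := by
    have h7 : Complex.exp z + β*z + α
        = (Complex.exp z - Complex.exp w) + β*(z-w) := by linear_combination hw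
    rw [h7]
    calc ‖(Complex.exp z - Complex.exp w) + β*(z-w)‖
        ≤ ‖Complex.exp z - Complex.exp w‖ + ‖β*(z-w)‖ :=
          norm_add_le _ _
      _ ≤ M/5 + b/10 := by
          rw [norm_mul]
          have := norm_nonneg (z-w)
          nlinarith
  -- denominator bound
  have hden : (9:ℝ)/10 * M - b ≤ ‖Complex.exp z + β‖ := by
    have h8 : ‖Complex.exp z‖ ≤ ‖Complex.exp z + β‖ + b := by
      calc ‖Complex.exp z‖ = ‖(Complex.exp z + β) + (-β)‖ := by ring_nf
        _ ≤ ‖Complex.exp z + β‖ + ‖-β‖ := norm_add_le _ _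
        _ = ‖Complex.exp z + β‖ + b := by rw [norm_neg]
    linarith
  have hdenpos : 0 < ‖Complex.exp z + β‖ := by nlinarith
  refine ⟨fun hc => by simp [hc] at hdenpos, ?_⟩
  rw [norm_div, norm_mul, norm_pow]
  rw [div_lt_one (by positivity)]
  have hnn := norm_nonneg (Complex.exp z + β*z + α)
  have hnn2 := norm_nonneg (Complex.exp z)
  nlinarith [sq_nonneg (‖Complex.exp z + β‖ - (9/10 * M - b)),
    mul_le_mul hh hez_ub hnn2 (by nlinarith : (0:ℝ) ≤ M/5 + b/10)]
end

section
/- Let α, β ∈ ℂ with β ≠ 0 and let N_h(z) = (z − 1 − αe^{−z})/(1 + βe^{−z}). There exists c > 0 such that for every w ∈ ℂ with Re(w) < −c, one has 1 + βe^{−w} ≠ 0 and |N_h(w)| ≤ |w|/2. -/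
/-- for `N_h(z) = (z - 1 - αe^{-z})/(1 + βe^{-z})` with `β ≠ 0`
there exists `c > 0` such that for all `w` with `Re w < -c` the denominator is
nonzero and `|N_h(w)| ≤ |w|/2`. -/
theorem stmt12 (α β : ℂ) (hβ : β ≠ 0) :
    ∃ c > (0 : ℝ), ∀ w : ℂ, w.re < -c →
      1 + β * Complex.exp (-w) ≠ 0 ∧
      ‖(w - 1 - α * Complex.exp (-w)) / (1 + β * Complex.exp (-w))‖ ≤
        ‖w‖ / 2 := by
  have hb : 0 < ‖β‖ := norm_pos_iff.mpr hβ
  set A := ‖α‖ with hA'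
  set B := ‖β‖ with hB'
  have hA : 0 ≤ A := norm_nonneg α
  refine ⟨max ((2*A+1)/B) 9, lt_max_of_lt_right (by norm_num), ?_⟩
  set c := max ((2*A+1)/B) 9 with hc
  intro w hw
  have hc9 : (9:ℝ) ≤ c := le_max_right _ _
  have hc1 : 2*A + 1 ≤ c * B := by
    have h := le_max_left ((2*A+1)/B) 9
    rw [← hc, div_le_iff₀ hb] at h
    linarith
  set r := Real.exp (-w.re) with hr
  have hre : ‖Complex.exp (-w)‖ = r := by
    rw [Complex.norm_exp]; simp [hr]
  have hrgt : Real.exp c < r := Real.exp_lt_exp.mpr (by linarith)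
  have hec : 3*c + 2 ≤ Real.exp c := by
    have h1 : c/2 + 1 ≤ Real.exp (c/2) := by linarith [Real.add_one_le_exp (c/2)]
    have h2 : Real.exp c = Real.exp (c/2) * Real.exp (c/2) := by
      rw [← Real.exp_add]; ring_nf
    nlinarith [Real.exp_pos (c/2)]
  have hrbig : 3*c + 2 < r := lt_of_le_of_lt hec hrgt
  have hwabs : c < ‖w‖ := by
    have h1 : |w.re| ≤ ‖w‖ := Complex.abs_re_le_norm w
    have h2 : -w.re ≤ |w.re| := neg_le_abs w.re
    linarith
  have hxabs : ‖β * Complex.exp (-w)‖ = B * r := by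
    rw [norm_mul, hre]
  -- denominator lower bound
  have htri : B * r - 1 ≤ ‖1 + β * Complex.exp (-w)‖ := by
    have h := norm_add_le (1 + β * Complex.exp (-w)) (-1)
    have he : (1 + β * Complex.exp (-w)) + -1 = β * Complex.exp (-w) := by ring
    rw [he, hxabs, norm_neg, norm_one] at h
    linarith
  have hBr3 : 3 < B * r := by
    nlinarith [mul_pos hb (Real.exp_pos (-w.re))]
  have hdenpos : 0 < ‖1 + β * Complex.exp (-w)‖ := by linarith
  have hden0 : 1 + β * Complex.exp (-w) ≠ 0 := by
    intro h; rw [h] at hdenpos; simp at hdenpos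
  refine ⟨hden0, ?_⟩
  -- numerator upper bound
  have hnum : ‖w - 1 - α * Complex.exp (-w)‖ ≤ ‖w‖ + 1 + A * r := by
    have h1 : ‖w - 1 - α * Complex.exp (-w)‖ ≤
        ‖w - 1‖ + ‖α * Complex.exp (-w)‖ :=
      norm_sub_le _ _
    have h2 : ‖w - 1‖ ≤ ‖w‖ + 1 := by
      have := norm_sub_le w 1
      simpa using this
    have h3 : ‖α * Complex.exp (-w)‖ = A * r := by rw [norm_mul, hre]
    linarith
  rw [norm_div, div_le_div_iff₀ hdenpos (by norm_num : (0:ℝ) < 2)]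
  have hkey : 2 * (‖w‖ + 1 + A * r) ≤ ‖w‖ * (B * r - 1) := by
    nlinarith [mul_nonneg (le_of_lt (sub_pos.mpr hwabs)) (le_of_lt (sub_pos.mpr hBr3)),
      mul_nonneg (sub_nonneg.mpr hc1) (le_of_lt (Real.exp_pos (-w.re)))]
  nlinarith [norm_nonneg w, norm_nonneg (w - 1 - α * Complex.exp (-w))]
end

section
/- Let α, β ∈ ℂ with β ≠ 0 and let N_h(z) = (z − 1 − αe^{−z})/(1 + βe^{−z}). There exists c > 0 such that for every w ∈ ℂ with Re(w) > c and |Im(w)| ≤ e^{Re(w)}/(3|β|), one has e^w + β ≠ 0 and |Re(N_h(w)) − Re(w) + 1| < 1/2; in particular −3/2 < Re(N_h(w)) − Re(w) < −1/2. -/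
set_option maxHeartbeats 1000000 in
/-- for `N_h(z) = (z - 1 - αe^{-z})/(1 + βe^{-z})` with `β ≠ 0`
there exists `c > 0` such that for all `w` with `Re w > c` and
`|Im w| ≤ e^{Re w}/(3|β|)`, one has `e^w + β ≠ 0` and
`|Re(N_h(w)) - Re(w) + 1| < 1/2`; in particular
`-3/2 < Re(N_h(w)) - Re(w) < -1/2`. -/
theorem stmt13 (α β : ℂ) (hβ : β ≠ 0) :
    ∃ c > (0 : ℝ), ∀ w : ℂ, w.re > c →
      |w.im| ≤ Real.exp w.re / (3 * ‖β‖) →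
      Complex.exp w + β ≠ 0 ∧
      |((w - 1 - α * Complex.exp (-w)) / (1 + β * Complex.exp (-w))).re - w.re + 1| < 1 / 2 ∧
      (-(3 / 2) < ((w - 1 - α * Complex.exp (-w)) / (1 + β * Complex.exp (-w))).re - w.re ∧
        ((w - 1 - α * Complex.exp (-w)) / (1 + β * Complex.exp (-w))).re - w.re < -(1 / 2)) := by
  set A := ‖α‖ with hAdef
  set B := ‖β‖ with hBdef
  have hA0 : 0 ≤ A := norm_nonneg α
  have hB : 0 < B := norm_pos_iff.mpr hβ
  have h2 : Filter.Tendsto (fun x : ℝ => (A + 2*B) * Real.exp (-x) + B * (x * Real.exp (-x)))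
      Filter.atTop (nhds 0) := by
    have t1 : Filter.Tendsto (fun x : ℝ => Real.exp (-x)) Filter.atTop (nhds 0) :=
      Real.tendsto_exp_neg_atTop_nhds_zero
    have t2 : Filter.Tendsto (fun x : ℝ => x * Real.exp (-x)) Filter.atTop (nhds 0) := by
      have := Real.tendsto_pow_mul_exp_neg_atTop_nhds_zero 1
      simpa using this
    have := (t1.const_mul (A + 2*B)).add (t2.const_mul B)
    simpa using this
  obtain ⟨c₀, hc₀⟩ := Filter.eventually_atTop.mp
    (h2.eventually (gt_mem_nhds (by norm_num : (0:ℝ) < 1/12)))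
  refine ⟨max c₀ (max 1 (Real.log B)),
    lt_of_lt_of_le one_pos (le_trans (le_max_left _ _) (le_max_right _ _)), ?_⟩
  intro w hx him
  set x := w.re with hxdef
  have hx1 : 1 < x := lt_of_le_of_lt (le_trans (le_max_left _ _) (le_max_right _ _)) hx
  have hxlog : Real.log B < x := lt_of_le_of_lt (le_trans (le_max_right _ _) (le_max_right _ _)) hx
  have hxc0 : c₀ ≤ x := le_of_lt (lt_of_le_of_lt (le_max_left _ _) hx)
  have hsmall := hc₀ x hxc0
  have hE0 : 0 < Real.exp (-x) := Real.exp_pos _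
  have hBE : B * Real.exp (-x) < 1/12 := by nlinarith
  have hNE : (A + B*(x+1)) * Real.exp (-x) < 1/12 := by nlinarith
  -- e^w + β ≠ 0
  have hexp : Complex.exp w + β ≠ 0 := by
    intro h
    have h1 : Complex.exp w = -β := by linear_combination h
    have h2 : Real.exp x = B := by
      have := congrArg (‖·‖) h1
      rwa [Complex.norm_exp, norm_neg, ← hBdef] at this
    have : B < Real.exp x := by
      calc B = Real.exp (Real.log B) := (Real.exp_log hB).symm
      _ < Real.exp x := Real.exp_lt_exp.mpr hxlog
    linarith
  set E := Complex.exp (-w) with hEdef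
  have habsE : ‖E‖ = Real.exp (-x) := by
    rw [hEdef, Complex.norm_exp, Complex.neg_re]
  have habsβE : ‖β * E‖ = B * Real.exp (-x) := by
    rw [norm_mul, habsE, ← hBdef]
  have key : (1:ℝ) ≤ ‖1 + β*E‖ + ‖β*E‖ := by
    have h := norm_add_le (1 + β*E) (-(β*E))
    rw [add_neg_cancel_right] at h
    simpa using h
  have hDlb : 11/12 < ‖1 + β*E‖ := by
    rw [habsβE] at key; linarith
  have hD0 : (1 + β*E) ≠ 0 := by
    intro h
    rw [h] at hDlb
    simp at hDlb
    linarith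
  have hiden : (w - 1 - α * E) / (1 + β*E) - (w - 1) = -((α + β*(w-1)) * E) / (1 + β*E) := by
    rw [eq_div_iff hD0, sub_mul, div_mul_cancel₀ _ hD0]
    ring
  have hre : ((w - 1 - α*E)/(1 + β*E)).re - x + 1 = (((w-1-α*E)/(1 + β*E)) - (w-1)).re := by
    simp [Complex.sub_re, Complex.one_re]
    ring
  have hb1 : |(((w-1-α*E)/(1 + β*E)) - (w-1)).re|
      ≤ ‖((w-1-α*E)/(1 + β*E)) - (w-1)‖ := Complex.abs_re_le_norm _
  rw [hiden] at hb1
  have habsval : ‖-((α + β*(w-1)) * E) / (1 + β*E)‖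
      = ‖α + β*(w-1)‖ * Real.exp (-x) / ‖1 + β*E‖ := by
    rw [norm_div, norm_neg, norm_mul, habsE]
  rw [habsval] at hb1
  have hnum : ‖α + β*(w-1)‖ ≤ A + B*(x + |w.im| + 1) := by
    calc ‖α + β*(w-1)‖ ≤ A + ‖β*(w-1)‖ := norm_add_le _ _
    _ = A + B * ‖w-1‖ := by rw [norm_mul]
    _ ≤ A + B * (‖w‖ + 1) := by
        have := norm_sub_le w 1
        simp at this
        nlinarith [this]
    _ ≤ A + B * (x + |w.im| + 1) := by
        have h1 : ‖w‖ ≤ |w.re| + |w.im| := Complex.norm_le_abs_re_add_abs_im w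
        have h2 : |w.re| = x := abs_of_pos (by linarith)
        nlinarith
  have hexx : Real.exp x * Real.exp (-x) = 1 := by
    rw [← Real.exp_add]; simp
  have himE : B * |w.im| * Real.exp (-x) ≤ 1/3 := by
    have h3B : 0 < 3 * B := by linarith
    rw [le_div_iff₀ h3B] at him
    nlinarith [abs_nonneg w.im, hE0.le]
  have hnumbound : ‖α + β*(w-1)‖ * Real.exp (-x) ≤ 5/12 := by
    have h1 : ‖α + β*(w-1)‖ * Real.exp (-x)
        ≤ (A + B*(x + |w.im| + 1)) * Real.exp (-x) := by
      apply mul_le_mul_of_nonneg_right hnum (le_of_lt hE0)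
    have h2 : (A + B*(x + |w.im| + 1)) * Real.exp (-x)
        = (A + B*(x+1)) * Real.exp (-x) + B * |w.im| * Real.exp (-x) := by ring
    linarith
  have hmain : |((w - 1 - α*E)/(1 + β*E)).re - x + 1| < 1/2 := by
    rw [hre, hiden]
    refine lt_of_le_of_lt hb1 ?_
    rw [div_lt_iff₀ (by linarith : (0:ℝ) < ‖1 + β*E‖)]
    linarith [hnumbound, hDlb]
  refine ⟨hexp, hmain, ?_⟩
  rcases abs_lt.mp hmain with ⟨hl, hr⟩
  constructor <;> linarith
end

section
/- Let a, b, c ∈ ℝ with a ≠ 0 and b ≠ 0, let h(t) = ae^t + bt + c, and suppose h has a real zero. Define the Newton iteration x₀ = −c/b and x_{n+1} = x_n − h(x_n)/h'(x_n), where h'(t) = ae^t + b. Then h'(x_n) ≠ 0 for every n ≥ 0 (so the sequence is well defined), the sequence (x_n) is monotone, and it converges to a real zero of h. -/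
open Filter Real Set

private lemma mvt_bounds (f f' : ℝ → ℝ) (hd : ∀ t, HasDerivAt f (f' t) t)
    (hm : StrictMono f') {u v : ℝ} (huv : u < v) :
    f' u * (v - u) < f v - f u ∧ f v - f u < f' v * (v - u) := by
  have hcf : Continuous f := continuous_iff_continuousAt.2 fun t => (hd t).continuousAt
  obtain ⟨ξ, hξ, hξeq⟩ := exists_hasDerivAt_eq_slope f f' huv hcf.continuousOn
    (fun t _ => hd t)
  have hne : v - u ≠ 0 := sub_ne_zero.2 huv.ne'
  have h1 : f v - f u = f' ξ * (v - u) := by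
    rw [hξeq, div_mul_cancel₀ _ hne]
  have h2 : f' u < f' ξ := hm hξ.1
  have h3 : f' ξ < f' v := hm hξ.2
  have hpos : 0 < v - u := by linarith
  constructor
  · nlinarith
  · nlinarith

private lemma newton_core (f f' : ℝ → ℝ)
    (hd : ∀ t, HasDerivAt f (f' t) t)
    (hm : StrictMono f') (hc : Continuous f')
    (x : ℕ → ℝ)
    (hrec : ∀ n, x (n + 1) = x n - f (x n) / f' (x n))
    (hf0 : 0 < f (x 0)) (hf'0 : 0 < f' (x 0))
    (hroot : ∃ t, f t = 0) :
    (∀ n, 0 < f' (x n)) ∧ Antitone x ∧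
      ∃ L, Filter.Tendsto x Filter.atTop (nhds L) ∧ f L = 0 := by
  have hcf : Continuous f := continuous_iff_continuousAt.2 fun t => (hd t).continuousAt
  obtain ⟨t0, ht0⟩ := hroot
  set S := {t : ℝ | f t = 0} with hS
  have hSroot : ∀ t ∈ S, t < x 0 := by
    intro t ht
    by_contra hle
    push_neg at hle
    rcases eq_or_lt_of_le hle with h | h
    · simp only [hS, Set.mem_setOf_eq] at ht
      rw [h] at hf0
      linarith
    · have hmvt := (mvt_bounds f f' hd hm h).1
      simp only [hS, Set.mem_setOf_eq] at ht
      nlinarith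
  have hbdd : BddAbove S := ⟨x 0, fun t ht => (hSroot t ht).le⟩
  have hSne : S.Nonempty := ⟨t0, ht0⟩
  have hScl : IsClosed S := isClosed_eq hcf continuous_const
  set ρ := sSup S with hρdef
  have hρroot : f ρ = 0 := hScl.csSup_mem hSne hbdd
  have hρlt : ρ < x 0 := hSroot _ hρroot
  have hpos : ∀ t, ρ < t → t ≤ x 0 → 0 < f t := by
    intro t h1 h2
    by_contra h
    push_neg at h
    rcases h2.eq_or_lt with heq | hlt
    · rw [heq] at h; linarith
    · have hmem : (0:ℝ) ∈ Set.Icc (f t) (f (x 0)) := ⟨h, hf0.le⟩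
      obtain ⟨s, hs, hfs⟩ := intermediate_value_Icc hlt.le hcf.continuousOn hmem
      have : s ≤ ρ := le_csSup hbdd hfs
      linarith [hs.1]
  have hder : ∀ t, ρ < t → t ≤ x 0 → 0 < f' t := by
    intro t h1 h2
    by_contra h
    push_neg at h
    have hmvt := (mvt_bounds f f' hd hm h1).2
    have hft : 0 < f t := hpos t h1 h2
    have hmul : f' t * (t - ρ) ≤ 0 :=
      mul_nonpos_iff.2 (Or.inr ⟨h, by linarith⟩)
    linarith
  have hinv : ∀ n, ρ < x n ∧ x n ≤ x 0 := by
    intro n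
    induction n with
    | zero => exact ⟨hρlt, le_refl _⟩
    | succ n ih =>
      obtain ⟨h1, h2⟩ := ih
      have hfp := hpos _ h1 h2
      have hfp' := hder _ h1 h2
      have hdivpos := div_pos hfp hfp'
      have hstep : x (n+1) < x n := by rw [hrec n]; linarith
      constructor
      · have hmvt := (mvt_bounds f f' hd hm h1).2
        have h3 : f (x n) < (x n - ρ) * f' (x n) := by nlinarith
        have h4 : f (x n) / f' (x n) < x n - ρ := (div_lt_iff₀ hfp').2 h3
        rw [hrec n]; linarith
      · linarith
  have f'pos : ∀ n, 0 < f' (x n) := fun n => hder _ (hinv n).1 (hinv n).2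
  have hstep : ∀ n, x (n+1) < x n := by
    intro n
    have := div_pos (hpos _ (hinv n).1 (hinv n).2) (f'pos n)
    rw [hrec n]; linarith
  have hanti : Antitone x := antitone_nat_of_succ_le fun n => (hstep n).le
  have hbl : BddBelow (Set.range x) := ⟨ρ, by rintro _ ⟨n, rfl⟩; exact (hinv n).1.le⟩
  have hL : Tendsto x atTop (nhds (⨅ n, x n)) := tendsto_atTop_ciInf hanti hbl
  set L := ⨅ n, x n with hLdef
  have hx1 : Tendsto (fun n => x (n+1)) atTop (nhds L) :=
    hL.comp (tendsto_add_atTop_nat 1)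
  have hA : Tendsto (fun n => f (x n)) atTop (nhds (f L)) := (hcf.tendsto L).comp hL
  have hB : Tendsto (fun n => f' (x n) * (x n - x (n+1))) atTop
      (nhds (f' L * (L - L))) := ((hc.tendsto L).comp hL).mul (hL.sub hx1)
  have heqfun : (fun n => f (x n)) = fun n => f' (x n) * (x n - x (n+1)) := by
    funext n
    rw [hrec n, sub_sub_cancel, mul_div_cancel₀ _ (f'pos n).ne']
  rw [heqfun] at hA
  have hfL : f L = 0 := by
    have h := tendsto_nhds_unique hA hB
    rw [h]; ring
  exact ⟨f'pos, hanti, L, hL, hfL⟩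

private lemma stmt17_aux (a b c : ℝ) (ha : 0 < a) (hb : b ≠ 0)
    (hzero : ∃ t : ℝ, a * Real.exp t + b * t + c = 0)
    (x : ℕ → ℝ) (hx0 : x 0 = -c / b)
    (hrec : ∀ n : ℕ, x (n + 1) =
      x n - (a * Real.exp (x n) + b * x n + c) / (a * Real.exp (x n) + b)) :
    (∀ n : ℕ, a * Real.exp (x n) + b ≠ 0) ∧
    (Monotone x ∨ Antitone x) ∧
    ∃ L : ℝ, Filter.Tendsto x Filter.atTop (nhds L) ∧
      a * Real.exp L + b * L + c = 0 := by
  set f : ℝ → ℝ := fun t => a * Real.exp t + b * t + c with hfdef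
  set f' : ℝ → ℝ := fun t => a * Real.exp t + b with hf'def
  have hd : ∀ t, HasDerivAt f (f' t) t := by
    intro t
    have h1 : HasDerivAt (fun t => a * Real.exp t) (a * Real.exp t) t :=
      (Real.hasDerivAt_exp t).const_mul a
    have h2 : HasDerivAt (fun t : ℝ => b * t + c) b t := by
      simpa using ((hasDerivAt_id t).const_mul b).add_const c
    simpa [hfdef, hf'def, add_assoc, Pi.add_def] using h1.add h2
  have hm : StrictMono f' := by
    intro s t hst
    have := Real.exp_lt_exp.2 hst
    simp only [hf'def]
    nlinarith
  have hc : Continuous f' := by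
    simp only [hf'def]
    exact (continuous_const.mul Real.continuous_exp).add continuous_const
  have hf0 : 0 < f (x 0) := by
    have : f (x 0) = a * Real.exp (x 0) := by
      simp only [hfdef, hx0]
      field_simp
      ring
    rw [this]
    positivity
  have hf'ne : f' (x 0) ≠ 0 := by
    intro h0
    obtain ⟨t, ht⟩ := hzero
    have htf : f t = 0 := ht
    rcases lt_trichotomy t (x 0) with hlt | heq | hgt
    · have := (mvt_bounds f f' hd hm hlt).2
      rw [h0] at this
      nlinarith [hf0]
    · rw [heq] at htf; linarith
    · have := (mvt_bounds f f' hd hm hgt).1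
      rw [h0] at this
      nlinarith [hf0]
  rcases hf'ne.lt_or_gt with hneg | hpos
  · -- f'(x 0) < 0 : reflect
    set g : ℝ → ℝ := fun t => f (-t) with hgdef
    set g' : ℝ → ℝ := fun t => -f' (-t) with hg'def
    set y : ℕ → ℝ := fun n => -x n with hydef
    have hdg : ∀ t, HasDerivAt g (g' t) t := by
      intro t
      have := HasDerivAt.comp t (hd (-t)) (hasDerivAt_neg t)
      simpa [hgdef, hg'def, Function.comp_def] using this
    have hmg : StrictMono g' := by
      intro s t hst
      have := hm (neg_lt_neg hst)
      simp only [hg'def]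
      linarith
    have hcg : Continuous g' := (hc.comp continuous_neg).neg
    have hrecg : ∀ n, y (n + 1) = y n - g (y n) / g' (y n) := by
      intro n
      simp only [hydef, hgdef, hg'def, neg_neg]
      rw [hrec n, div_neg]
      ring
    have hg0 : 0 < g (y 0) := by simpa [hgdef, hydef] using hf0
    have hg'0 : 0 < g' (y 0) := by
      simp only [hg'def, hydef, neg_neg]
      linarith
    have hrootg : ∃ t, g t = 0 := by
      obtain ⟨t, ht⟩ := hzero
      exact ⟨-t, by simpa [hgdef] using ht⟩
    obtain ⟨h1, h2, M, hM, hgM⟩ :=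
      newton_core g g' hdg hmg hcg y hrecg hg0 hg'0 hrootg
    refine ⟨?_, Or.inl ?_, -M, ?_, ?_⟩
    · intro n
      have := h1 n
      simp only [hg'def, hydef, neg_neg, hf'def] at this
      intro h; rw [h] at this; simp at this
    · intro m n hmn
      have := h2 hmn
      simp only [hydef] at this
      linarith
    · have := hM.neg
      simp only [hydef, neg_neg] at this
      exact this
    · have := hgM
      simp only [hgdef, hfdef] at this
      linarith
  · obtain ⟨h1, h2, L, hL, hfL⟩ :=
      newton_core f f' hd hm hc x hrec hf0 hpos
        (by obtain ⟨t, ht⟩ := hzero; exact ⟨t, ht⟩)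
    exact ⟨fun n => (h1 n).ne', Or.inr h2, L, hL, hfL⟩

/-- for `h(t) = ae^t + bt + c` with `a, b ≠ 0` real possessing a
real zero, the Newton iteration started at `x₀ = -c/b` is well defined
(`h'(xₙ) ≠ 0` for all `n`), monotone, and converges to a real zero of `h`. -/
theorem stmt17 (a b c : ℝ) (ha : a ≠ 0) (hb : b ≠ 0)
    (hzero : ∃ t : ℝ, a * Real.exp t + b * t + c = 0)
    (x : ℕ → ℝ) (hx0 : x 0 = -c / b)
    (hrec : ∀ n : ℕ, x (n + 1) =
      x n - (a * Real.exp (x n) + b * x n + c) / (a * Real.exp (x n) + b)) :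
    (∀ n : ℕ, a * Real.exp (x n) + b ≠ 0) ∧
    (Monotone x ∨ Antitone x) ∧
    ∃ L : ℝ, Filter.Tendsto x Filter.atTop (nhds L) ∧
      a * Real.exp L + b * L + c = 0 := by
  rcases ha.lt_or_gt with haneg | hapos
  · have ha' : 0 < -a := by linarith
    have hb' : -b ≠ 0 := neg_ne_zero.2 hb
    have hzero' : ∃ t : ℝ, -a * Real.exp t + -b * t + -c = 0 := by
      obtain ⟨t, ht⟩ := hzero
      exact ⟨t, by linarith⟩
    have hx0' : x 0 = -(-c) / -b := by rw [hx0]; ring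
    have hrec' : ∀ n : ℕ, x (n + 1) =
        x n - (-a * Real.exp (x n) + -b * x n + -c) / (-a * Real.exp (x n) + -b) := by
      intro n
      rw [hrec n]
      congr 1
      rw [show -a * Real.exp (x n) + -b * x n + -c
          = -(a * Real.exp (x n) + b * x n + c) by ring,
        show -a * Real.exp (x n) + -b = -(a * Real.exp (x n) + b) by ring,
        neg_div_neg_eq]
    obtain ⟨h1, h2, L, hL, hfL⟩ := stmt17_aux (-a) (-b) (-c) ha' hb' hzero' x hx0' hrec'
    refine ⟨fun n h => h1 n (by linarith), h2, L, hL, by linarith⟩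
  · exact stmt17_aux a b c hapos hb hzero x hx0 hrec
end
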